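/- arXiv:2004.08869 — 5 statements merged into one kernel-verified Lean document; each statement's English description precedes it below -/
import Mathlib

section
/- Let R be a Noetherian domain and A a Krull domain containing R, and let π be a nonzero element of A with πA ≠ A. Then: (1) if A/P is a finitely generated R-algebra for every associated prime P of A/πA, then A/πA is a finitely generated R-algebra; (2) if A/P is a finite R-module for every associated prime P of A/πA, then A/πA is a finite R-module. -/
/-- The transcendence degree (as an extended natural number) of a ring extension given by a
ring homomorphism `f : R →+* A`: the supremum of the cardinalities of subsets of `A` that are
algebraically independent over `R`.  For an extension of integral domains with `f` injective,
this agrees with the transcendence degree of the induced extension of fraction fields. -/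
noncomputable def trdegHom {R A : Type*} [CommRing R] [CommRing A] (f : R →+* A) : ℕ∞ :=
  letI := f.toAlgebra
  Cardinal.toENat (⨆ s : {s : Set A // AlgebraicIndependent R ((↑) : s → A)}, Cardinal.mk s.1)

/-- The height of an ideal: the infimum of the heights of the prime ideals containing it.
For a prime ideal this is the usual height, i.e. the supremum of the lengths of chains of
primes descending from it. -/
noncomputable def idealHeight {A : Type*} [CommRing A] (I : Ideal A) : ℕ∞ :=
  ⨅ (P : PrimeSpectrum A) (_ : I ≤ P.asIdeal), Order.height P

/-- A Krull domain: an integral domain such that the localization at every height-one prime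
is a discrete valuation ring, `A` is the intersection of these localizations inside its
fraction field, and every nonzero element lies in only finitely many height-one primes. -/
def IsKrullDomain (A : Type*) [CommRing A] [IsDomain A] : Prop :=
  (∀ P : PrimeSpectrum A, Order.height P = 1 →
      IsDiscreteValuationRing (Localization.AtPrime P.asIdeal)) ∧
  (∀ x : FractionRing A,
      (∀ P : PrimeSpectrum A, Order.height P = 1 →
        ∃ a s : A, s ∉ P.asIdeal ∧
          algebraMap A (FractionRing A) s * x = algebraMap A (FractionRing A) a) →
      ∃ a : A, algebraMap A (FractionRing A) a = x) ∧
  (∀ a : A, a ≠ 0 → {P : PrimeSpectrum A | Order.height P = 1 ∧ a ∈ P.asIdeal}.Finite)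

universe u

/-- A Nagata (pseudo-geometric) ring: a Noetherian ring such that for every prime `p` and
every finite extension field `L` of the fraction field of `R ⧸ p`, the integral closure of
`R ⧸ p` in `L` is a finite `R ⧸ p`-module. -/
def IsNagataRing (R : Type u) [CommRing R] : Prop :=
  IsNoetherianRing R ∧
  ∀ (p : Ideal R) [p.IsPrime],
    ∀ (L : Type u) [Field L] [Algebra (R ⧸ p) L] [Algebra (FractionRing (R ⧸ p)) L]
      [IsScalarTower (R ⧸ p) (FractionRing (R ⧸ p)) L],
      FiniteDimensional (FractionRing (R ⧸ p)) L →
      Module.Finite (R ⧸ p) (integralClosure (R ⧸ p) L)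

set_option linter.unusedSectionVars false
set_option linter.unusedVariables false

namespace L37

variable {A : Type*} [CommRing A] [IsDomain A]

def pk (Q : PrimeSpectrum A) (k : ℕ) : Ideal A :=
  (IsLocalRing.maximalIdeal (Localization.AtPrime Q.asIdeal) ^ k).comap
    (algebraMap A (Localization.AtPrime Q.asIdeal))

variable (Q : PrimeSpectrum A)
  [IsDiscreteValuationRing (Localization.AtPrime Q.asIdeal)]

local notation "f" => algebraMap A (Localization.AtPrime Q.asIdeal)

theorem mem_pk_iff {ϖ : Localization.AtPrime Q.asIdeal} (hϖ : Irreducible ϖ) {a : A} {k : ℕ} :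
    a ∈ pk Q k ↔ ϖ ^ k ∣ f a := by
  rw [pk, Ideal.mem_comap, hϖ.maximalIdeal_eq, Ideal.span_singleton_pow,
    Ideal.mem_span_singleton]

/-- exact valuation iff unit times power of uniformizer -/
theorem vexact_iff {ϖ : Localization.AtPrime Q.asIdeal} (hϖ : Irreducible ϖ) {a : A} {k : ℕ} :
    (a ∈ pk Q k ∧ a ∉ pk Q (k + 1)) ↔
      ∃ u : (Localization.AtPrime Q.asIdeal)ˣ, f a = u * ϖ ^ k := by
  rw [mem_pk_iff Q hϖ, mem_pk_iff Q hϖ]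
  constructor
  · rintro ⟨⟨c, hc⟩, h2⟩
    have hcu : IsUnit c := by
      by_contra hcu
      have hcm : c ∈ IsLocalRing.maximalIdeal (Localization.AtPrime Q.asIdeal) :=
        hcu
      rw [hϖ.maximalIdeal_eq, Ideal.mem_span_singleton] at hcm
      obtain ⟨d, rfl⟩ := hcm
      exact h2 ⟨d, by rw [hc, pow_succ]; ring⟩
    exact ⟨hcu.unit, by rw [hc, IsUnit.unit_spec, mul_comm]⟩
  · rintro ⟨u, hu⟩
    constructor
    · exact ⟨u, by rw [hu, mul_comm]⟩
    · rintro ⟨c, hc⟩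
      rw [hu, pow_succ] at hc
      have hϖ0 : (ϖ : Localization.AtPrime Q.asIdeal) ^ k ≠ 0 := pow_ne_zero _ hϖ.ne_zero
      have h3 : (u : Localization.AtPrime Q.asIdeal) = ϖ * c := by
        apply mul_left_cancel₀ hϖ0
        linear_combination hc
      exact hϖ.not_isUnit (isUnit_of_mul_isUnit_left (y := c)
        (by rw [← h3]; exact u.isUnit))

end L37

namespace L37

variable {A : Type*} [CommRing A] [IsDomain A]

def Wdvd (Q : PrimeSpectrum A) (b a : A) : Prop :=
  ∃ s ∉ Q.asIdeal, ∃ c : A, s * a = c * b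

def VExact (Q : PrimeSpectrum A) (a : A) (k : ℕ) : Prop :=
  a ∈ pk Q k ∧ a ∉ pk Q (k + 1)

theorem pk_zero (Q : PrimeSpectrum A) : pk Q 0 = ⊤ := by
  simp [pk, Ideal.comap_top]

theorem pk_anti (Q : PrimeSpectrum A) {j k : ℕ} (h : j ≤ k) : pk Q k ≤ pk Q j :=
  Ideal.comap_mono (Ideal.pow_le_pow_right h)

theorem mem_pk_one (Q : PrimeSpectrum A) {a : A} : a ∈ pk Q 1 ↔ a ∈ Q.asIdeal := by
  have h := Localization.AtPrime.comap_maximalIdeal (I := Q.asIdeal)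
  simp only [pk, pow_one]
  constructor
  · intro h2; rw [← h]; exact h2
  · intro h2; rw [← h] at h2; exact h2

theorem mul_mem_pk (Q : PrimeSpectrum A) {a b : A} {j k : ℕ} (ha : a ∈ pk Q j)
    (hb : b ∈ pk Q k) : a * b ∈ pk Q (j + k) := by
  simp only [pk, Ideal.mem_comap, map_mul, pow_add] at *
  exact Ideal.mul_mem_mul ha hb

theorem loc_inj (Q : PrimeSpectrum A) :
    Function.Injective (algebraMap A (Localization.AtPrime Q.asIdeal)) :=
  IsLocalization.injective _ Q.asIdeal.primeCompl_le_nonZeroDivisors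

variable (Q : PrimeSpectrum A) [IsDiscreteValuationRing (Localization.AtPrime Q.asIdeal)]

local notation "f" => algebraMap A (Localization.AtPrime Q.asIdeal)

theorem vexact_iff' {a : A} {k : ℕ} {ϖ : Localization.AtPrime Q.asIdeal} (hϖ : Irreducible ϖ) :
    VExact Q a k ↔ ∃ u : (Localization.AtPrime Q.asIdeal)ˣ, f a = u * ϖ ^ k :=
  vexact_iff Q hϖ

theorem exists_vexact {a : A} (ha : a ≠ 0) : ∃ k, VExact Q a k := by
  obtain ⟨ϖ, hϖ⟩ := IsDiscreteValuationRing.exists_irreducible (Localization.AtPrime Q.asIdeal)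
  have ha' : f a ≠ 0 := fun h => ha (loc_inj Q (by rw [h, map_zero]))
  obtain ⟨n, u, hu⟩ := IsDiscreteValuationRing.eq_unit_mul_pow_irreducible ha' hϖ
  exact ⟨n, (vexact_iff' Q hϖ).2 ⟨u, hu⟩⟩

theorem vexact_mul {a b : A} {j k : ℕ} (ha : VExact Q a j) (hb : VExact Q b k) :
    VExact Q (a * b) (j + k) := by
  obtain ⟨ϖ, hϖ⟩ := IsDiscreteValuationRing.exists_irreducible (Localization.AtPrime Q.asIdeal)
  obtain ⟨u, hu⟩ := (vexact_iff' Q hϖ).1 ha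
  obtain ⟨v, hv⟩ := (vexact_iff' Q hϖ).1 hb
  refine (vexact_iff' Q hϖ).2 ⟨u * v, ?_⟩
  rw [map_mul, hu, hv, pow_add, Units.val_mul]; ring

theorem vexact_zero_iff {a : A} : VExact Q a 0 ↔ a ∉ Q.asIdeal := by
  unfold VExact
  rw [pk_zero, zero_add, mem_pk_one]
  simp

theorem vexact_pow {t : A} (ht : VExact Q t 1) (m : ℕ) : VExact Q (t ^ m) m := by
  induction m with
  | zero =>
    rw [pow_zero, vexact_zero_iff]
    exact fun h => Q.isPrime.ne_top (Q.asIdeal.eq_top_of_isUnit_mem h isUnit_one)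
  | succ n ih =>
    have := vexact_mul Q ih ht
    rwa [← pow_succ] at this

theorem exists_vexact_one : ∃ t : A, VExact Q t 1 := by
  obtain ⟨ϖ, hϖ⟩ := IsDiscreteValuationRing.exists_irreducible (Localization.AtPrime Q.asIdeal)
  obtain ⟨⟨t, s⟩, hts⟩ := IsLocalization.surj Q.asIdeal.primeCompl ϖ
  have hs : IsUnit (f (s : A)) := IsLocalization.map_units _ s
  refine ⟨t, (vexact_iff' Q hϖ).2 ⟨hs.unit, ?_⟩⟩
  rw [← hts, IsUnit.unit_spec, pow_one]; ring

/-- local division: if a has exact valuation k and y has valuation ≥ k then a ∣ y locally -/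
theorem wdvd_of_vexact {a y : A} {k : ℕ} (ha : VExact Q a k) (hy : y ∈ pk Q k) :
    Wdvd Q a y := by
  obtain ⟨ϖ, hϖ⟩ := IsDiscreteValuationRing.exists_irreducible (Localization.AtPrime Q.asIdeal)
  obtain ⟨u, hu⟩ := (vexact_iff' Q hϖ).1 ha
  obtain ⟨d, hd⟩ := (mem_pk_iff Q hϖ).1 hy
  obtain ⟨⟨c, s⟩, hcs⟩ := IsLocalization.surj Q.asIdeal.primeCompl (d * (↑u⁻¹ :
    (Localization.AtPrime Q.asIdeal)ˣ))
  refine ⟨s, s.2, c, loc_inj Q ?_⟩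
  rw [map_mul, map_mul, hd, hu]
  have : (f (s : A)) * (d * (↑u⁻¹ : (Localization.AtPrime Q.asIdeal)ˣ)) = f c := by
    rw [← hcs]; ring
  rw [← this]
  have h2 : (↑u⁻¹ : Localization.AtPrime Q.asIdeal) * ↑u = 1 := Units.inv_mul u
  linear_combination (-(f (s:A) * d * ϖ ^ k)) * h2

/-- shifting: if x has exact valuation j then x*z ∈ pk (j+1) ↔ z ∈ Q -/
theorem vexact_mul_mem_succ_iff {x z : A} {j : ℕ} (hx : VExact Q x j) :
    x * z ∈ pk Q (j + 1) ↔ z ∈ Q.asIdeal := by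
  obtain ⟨ϖ, hϖ⟩ := IsDiscreteValuationRing.exists_irreducible (Localization.AtPrime Q.asIdeal)
  obtain ⟨u, hu⟩ := (vexact_iff' Q hϖ).1 hx
  rw [mem_pk_iff Q hϖ, map_mul, hu, ← mem_pk_one, mem_pk_iff Q hϖ, pow_one]
  have hϖ0 : ϖ ^ j ≠ 0 := pow_ne_zero _ hϖ.ne_zero
  constructor
  · rintro ⟨c, hc⟩
    refine ⟨(↑u⁻¹ : (Localization.AtPrime Q.asIdeal)ˣ) * c, mul_left_cancel₀ hϖ0 ?_⟩
    have := hc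
    rw [pow_succ] at this
    calc ϖ ^ j * f z = (↑u⁻¹:(Localization.AtPrime Q.asIdeal)ˣ) * (↑u * ϖ ^ j * f z) := by
          rw [← mul_assoc, ← mul_assoc, Units.inv_mul, one_mul]
      _ = (↑u⁻¹:(Localization.AtPrime Q.asIdeal)ˣ) * (ϖ ^ j * ϖ * c) := by rw [this]
      _ = ϖ ^ j * (ϖ * (↑u⁻¹ * c)) := by ring
  · rintro ⟨c, hc⟩
    exact ⟨u * c, by rw [hc, pow_succ]; ring⟩

/-- unit cancellation -/
theorem unit_mul_mem_pk_iff {s y : A} (hs : s ∉ Q.asIdeal) (k : ℕ) :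
    s * y ∈ pk Q k ↔ y ∈ pk Q k := by
  have hsu : IsUnit (f s) := IsLocalization.map_units (M := Q.asIdeal.primeCompl) (Localization.AtPrime Q.asIdeal) ⟨s, hs⟩
  simp only [pk, Ideal.mem_comap, map_mul]
  constructor
  · intro h
    have := Ideal.mul_mem_left _ (↑hsu.unit⁻¹) h
    rwa [← mul_assoc, IsUnit.val_inv_mul, one_mul] at this
  · intro h
    exact Ideal.mul_mem_left _ _ h

end L37

namespace L37

variable {A : Type*} [CommRing A] [IsDomain A]

theorem wdvd_global
    (hK2 : ∀ x : FractionRing A,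
      (∀ P : PrimeSpectrum A, Order.height P = 1 →
        ∃ a s : A, s ∉ P.asIdeal ∧
          algebraMap A (FractionRing A) s * x = algebraMap A (FractionRing A) a) →
      ∃ a : A, algebraMap A (FractionRing A) a = x)
    {a b : A} (hb : b ≠ 0)
    (h : ∀ Q : PrimeSpectrum A, Order.height Q = 1 → Wdvd Q b a) : b ∣ a := by
  set g := algebraMap A (FractionRing A) with hg
  have ginj : Function.Injective g := IsFractionRing.injective A (FractionRing A)
  have hgb : g b ≠ 0 := fun h0 => hb (ginj (by rw [h0, map_zero]))
  have hside : ∀ P : PrimeSpectrum A, Order.height P = 1 →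
      ∃ a' s : A, s ∉ P.asIdeal ∧ g s * (g a / g b) = g a' := by
    intro P hP
    obtain ⟨s, hs, c, hsc⟩ := h P hP
    refine ⟨c, s, hs, ?_⟩
    rw [mul_div_assoc', div_eq_iff hgb, ← map_mul, ← map_mul, hsc, mul_comm]
  obtain ⟨a', ha'⟩ := hK2 (g a / g b) hside
  refine ⟨a', ginj ?_⟩
  rw [map_mul, ha', mul_comm, div_mul_cancel₀ _ hgb]

/-- distinct height-one primes are incomparable -/
theorem height_one_not_le {P Q : PrimeSpectrum A} (hP : Order.height P = 1)
    (hQ : Order.height Q = 1) (hne : P ≠ Q) : ¬(P.asIdeal ≤ Q.asIdeal) := by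
  intro hle
  have hlt : P < Q := lt_of_le_of_ne hle (fun h => hne (PrimeSpectrum.ext congr($(h).asIdeal)))
  have := Order.height_strictMono hlt (by rw [hP]; exact Ne.lt_top (by simp))
  rw [hP, hQ] at this
  exact lt_irrefl _ this

end L37

namespace L37

variable {A : Type*} [CommRing A] [IsDomain A]

theorem pow_mem_pk (Q : PrimeSpectrum A) {a : A} (ha : a ∈ Q.asIdeal) (m : ℕ) :
    a ^ m ∈ pk Q m := by
  induction m with
  | zero => rw [pk_zero]; trivial
  | succ n ih =>
    rw [pow_succ]
    exact mul_mem_pk Q ih ((mem_pk_one Q).2 ha)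

section Main

variable (hK1 : ∀ P : PrimeSpectrum A, Order.height P = 1 →
      IsDiscreteValuationRing (Localization.AtPrime P.asIdeal))
  (hK2 : ∀ x : FractionRing A,
      (∀ P : PrimeSpectrum A, Order.height P = 1 →
        ∃ a s : A, s ∉ P.asIdeal ∧
          algebraMap A (FractionRing A) s * x = algebraMap A (FractionRing A) a) →
      ∃ a : A, algebraMap A (FractionRing A) a = x)
  {π : A} (hπ0 : π ≠ 0)
  (e : PrimeSpectrum A → ℕ)
  (he : ∀ Q : PrimeSpectrum A, Order.height Q = 1 → π ∈ Q.asIdeal → VExact Q π (e Q))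

include hK1 hK2 hπ0 he

theorem mem_span_pi_iff {a : A} :
    a ∈ Ideal.span {π} ↔
      ∀ Q : PrimeSpectrum A, Order.height Q = 1 → π ∈ Q.asIdeal → a ∈ pk Q (e Q) := by
  constructor
  · rintro ha Q hQ hπQ
    rw [Ideal.mem_span_singleton] at ha
    obtain ⟨c, rfl⟩ := ha
    haveI := hK1 Q hQ
    have := mul_mem_pk Q ((he Q hQ hπQ).1) (show c ∈ pk Q 0 by rw [pk_zero]; trivial)
    rwa [add_zero] at this
  · intro ha
    rw [Ideal.mem_span_singleton]
    apply wdvd_global hK2 hπ0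
    intro Q hQ
    haveI := hK1 Q hQ
    by_cases hπQ : π ∈ Q.asIdeal
    · exact wdvd_of_vexact Q (he Q hQ hπQ) (ha Q hQ hπQ)
    · exact wdvd_of_vexact Q ((vexact_zero_iff Q).2 hπQ)
        (show a ∈ pk Q 0 by rw [pk_zero]; trivial)

theorem e_pos {Q : PrimeSpectrum A} (hQ : Order.height Q = 1) (hπQ : π ∈ Q.asIdeal) :
    1 ≤ e Q := by
  by_contra h
  push_neg at h
  have h0 : e Q = 0 := Nat.lt_one_iff.1 h
  exact (he Q hQ hπQ).2 (by rw [h0, zero_add, mem_pk_one]; exact hπQ)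

theorem mem_ass (hK3 : ∀ a : A, a ≠ 0 →
      {P : PrimeSpectrum A | Order.height P = 1 ∧ a ∈ P.asIdeal}.Finite)
    {Q : PrimeSpectrum A} (hQ : Order.height Q = 1) (hπQ : π ∈ Q.asIdeal) :
    Q.asIdeal ∈ associatedPrimes A (A ⧸ Ideal.span {π}) := by
  classical
  haveI := hK1 Q hQ
  set S : Finset (PrimeSpectrum A) := (hK3 π hπ0).toFinset with hS
  have hmemS : ∀ Q' : PrimeSpectrum A, Q' ∈ S ↔ Order.height Q' = 1 ∧ π ∈ Q'.asIdeal := by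
    intro Q'; rw [hS, Set.Finite.mem_toFinset]; rfl
  -- choose q_{Q'} ∈ Q' \ Q for Q' ≠ Q
  have hq : ∀ Q' ∈ S.erase Q, ∃ q : A, q ∈ Q'.asIdeal ∧ q ∉ Q.asIdeal := by
    intro Q' hQ'
    obtain ⟨hne, hmem⟩ := Finset.mem_erase.1 hQ'
    have := height_one_not_le ((hmemS Q').1 hmem).1 hQ hne
    obtain ⟨x, hx1, hx2⟩ := SetLike.not_le_iff_exists.1 this
    exact ⟨x, hx1, hx2⟩
  choose q hq1 hq2 using hq
  obtain ⟨t, ht⟩ := exists_vexact_one Q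
  set d : A := ∏ Q' ∈ (S.erase Q).attach, (q Q' Q'.2) ^ (e Q') with hd
  have hdQ : d ∉ Q.asIdeal := by
    intro hmem
    rw [hd] at hmem
    rw [Ideal.IsPrime.prod_mem_iff] at hmem
    obtain ⟨i, _, hi⟩ := hmem
    exact hq2 i i.2 (Q.isPrime.mem_of_pow_mem _ hi)
  set x : A := t ^ (e Q - 1) * d with hx
  have hxQ : VExact Q x (e Q - 1) := by
    have h1 := vexact_pow Q ht (e Q - 1)
    have h2 : VExact Q d 0 := (vexact_zero_iff Q).2 hdQ
    have := vexact_mul Q h1 h2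
    rwa [add_zero] at this
  have hxQ' : ∀ Q' ∈ S.erase Q, x ∈ pk Q' (e Q') := by
    intro Q' hQ'
    have : d ∈ pk Q' (e Q') := by
      rw [hd, ← Finset.mul_prod_erase _ _ (Finset.mem_attach _ ⟨Q', hQ'⟩)]
      have hqm : (q Q' hQ') ^ (e Q') ∈ pk Q' (e Q') := pow_mem_pk Q' (hq1 Q' hQ') _
      exact Ideal.mul_mem_right _ _ hqm
    rw [hx]
    exact Ideal.mul_mem_left _ _ this
  refine ⟨Q.isPrime, ⟨Ideal.Quotient.mk _ x, ?_⟩⟩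
  suffices hcol : Q.asIdeal =
      (⊥ : Submodule A (A ⧸ Ideal.span {π})).colon {Ideal.Quotient.mk _ x} by
    rw [← hcol, Q.isPrime.radical]
  ext b
  rw [Submodule.mem_colon_singleton, Submodule.mem_bot]
  have hsmul : b • (Ideal.Quotient.mk (Ideal.span {π}) x) =
      Ideal.Quotient.mk (Ideal.span {π}) (b * x) := rfl
  rw [hsmul, Ideal.Quotient.eq_zero_iff_mem,
    mem_span_pi_iff hK1 hK2 hπ0 e he]
  have heQ : 1 ≤ e Q := e_pos hK1 hK2 hπ0 e he hQ hπQ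
  constructor
  · intro hb Q'' hQ'' hπQ''
    by_cases hne : Q'' = Q
    · subst hne
      have h1 : b ∈ pk Q'' 1 := (mem_pk_one Q'').2 hb
      have h4 := mul_mem_pk Q'' h1 hxQ.1
      have h5 : 1 + (e Q'' - 1) = e Q'' := by omega
      rwa [h5] at h4
    · have : Q'' ∈ S.erase Q := Finset.mem_erase.2 ⟨hne, (hmemS Q'').2 ⟨hQ'', hπQ''⟩⟩
      exact Ideal.mul_mem_left _ _ (hxQ' Q'' this)
  · intro hbx
    have h2 := hbx Q hQ hπQ
    rw [mul_comm] at h2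
    have h3 : e Q = e Q - 1 + 1 := (Nat.succ_pred_eq_of_pos heQ).symm
    rw [h3] at h2
    exact (vexact_mul_mem_succ_iff Q hxQ).1 h2

end Main

end L37

namespace L37

variable {A : Type*} [CommRing A] [IsDomain A]

theorem VExact.ne_zero {Q : PrimeSpectrum A} {a : A} {k : ℕ} (h : VExact Q a k) : a ≠ 0 := by
  rintro rfl
  exact h.2 (Ideal.zero_mem _)

section Main2

variable (hK1 : ∀ P : PrimeSpectrum A, Order.height P = 1 →
      IsDiscreteValuationRing (Localization.AtPrime P.asIdeal))
  (hK2 : ∀ x : FractionRing A,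
      (∀ P : PrimeSpectrum A, Order.height P = 1 →
        ∃ a s : A, s ∉ P.asIdeal ∧
          algebraMap A (FractionRing A) s * x = algebraMap A (FractionRing A) a) →
      ∃ a : A, algebraMap A (FractionRing A) a = x)
  (hK3 : ∀ a : A, a ≠ 0 →
      {P : PrimeSpectrum A | Order.height P = 1 ∧ a ∈ P.asIdeal}.Finite)

include hK1 hK2 hK3

/-- Core geometric step: the quotient `(K ⊓ P^(j))/(K ⊓ P^(j+1))` is finitely generated. -/
theorem geo_step {Q : PrimeSpectrum A} (hQ : Order.height Q = 1)
    (hnoeth : IsNoetherianRing (A ⧸ Q.asIdeal)) (K : Ideal A) (j : ℕ) :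
    ∃ g : Finset A, (↑g : Set A) ⊆ (K ⊓ pk Q j : Ideal A) ∧
      K ⊓ pk Q j ≤ Ideal.span ↑g ⊔ (K ⊓ pk Q (j + 1)) := by
  classical
  haveI := hK1 Q hQ
  obtain ⟨t, ht⟩ := exists_vexact_one Q
  set x : A := t ^ j with hxdef
  have hxe : VExact Q x j := vexact_pow Q ht j
  have hx0 : x ≠ 0 := hxe.ne_zero
  set T : Finset (PrimeSpectrum A) := ((hK3 x hx0).toFinset).erase Q with hT
  have hmemT : ∀ Q' : PrimeSpectrum A, Q' ∈ T ↔
      Q' ≠ Q ∧ Order.height Q' = 1 ∧ x ∈ Q'.asIdeal := by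
    intro Q'
    rw [hT, Finset.mem_erase, Set.Finite.mem_toFinset]
    rfl
  -- exact valuations of x at the primes of T
  have hf : ∀ Q' : PrimeSpectrum A, Q' ∈ T → ∃ k, VExact Q' x k := by
    intro Q' hQ'
    haveI := hK1 Q' ((hmemT Q').1 hQ').2.1
    exact exists_vexact Q' hx0
  choose f hfs using hf
  -- elements of Q' not in Q
  have hq : ∀ Q' : PrimeSpectrum A, Q' ∈ T → ∃ q : A, q ∈ Q'.asIdeal ∧ q ∉ Q.asIdeal := by
    intro Q' hQ'
    obtain ⟨hne, hh, _⟩ := (hmemT Q').1 hQ'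
    exact SetLike.not_le_iff_exists.1 (height_one_not_le hh hQ hne)
  choose q hq1 hq2 using hq
  set d : A := ∏ Q' ∈ T.attach, (q Q' Q'.2) ^ (f Q' Q'.2) with hd
  have hdQ : d ∉ Q.asIdeal := by
    intro hmem
    rw [hd, Ideal.IsPrime.prod_mem_iff] at hmem
    obtain ⟨i, _, hi⟩ := hmem
    exact hq2 i i.2 (Q.isPrime.mem_of_pow_mem _ hi)
  have hdmem : ∀ Q' : PrimeSpectrum A, (hQ' : Q' ∈ T) → d ∈ pk Q' (f Q' hQ') := by
    intro Q' hQ'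
    rw [hd, ← Finset.mul_prod_erase _ _ (Finset.mem_attach _ ⟨Q', hQ'⟩)]
    exact Ideal.mul_mem_right _ _ (pow_mem_pk Q' (hq1 Q' hQ') _)
  -- global divisibility
  have hdiv : ∀ w : A, w ∈ pk Q j → x ∣ d * w := by
    intro w hw
    apply wdvd_global hK2 hx0
    intro Q'' hQ''
    haveI := hK1 Q'' hQ''
    by_cases hc1 : Q'' = Q
    · subst hc1
      exact wdvd_of_vexact Q'' hxe (Ideal.mul_mem_left _ _ hw)
    · by_cases hc2 : Q'' ∈ T
      · exact wdvd_of_vexact Q'' (hfs Q'' hc2) (Ideal.mul_mem_right _ _ (hdmem Q'' hc2))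
      · have hxQ'' : x ∉ Q''.asIdeal := by
          intro hmem
          exact hc2 ((hmemT Q'').2 ⟨hc1, hQ'', hmem⟩)
        exact wdvd_of_vexact Q'' ((vexact_zero_iff Q'').2 hxQ'')
          (show d * w ∈ pk Q'' 0 by rw [pk_zero]; trivial)
  -- the ideal of quotients
  set W : Ideal A := (Ideal.span {d} * (K ⊓ pk Q j)).colon (Ideal.span {x}) with hW
  set N : Ideal (A ⧸ Q.asIdeal) := W.map (Ideal.Quotient.mk Q.asIdeal) with hN
  obtain ⟨u, hu⟩ := (isNoetherian_def.1 hnoeth N : Submodule.FG N)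
  have husub : (↑u : Set (A ⧸ Q.asIdeal)) ⊆ N := hu ▸ Submodule.subset_span
  -- lift each generator to W
  have hlift : ∀ v : A ⧸ Q.asIdeal, v ∈ N → ∃ z : A, z ∈ W ∧ Ideal.Quotient.mk Q.asIdeal z = v := by
    intro v hv
    rw [hN] at hv
    obtain ⟨z, hz, hz2⟩ := (Ideal.mem_map_iff_of_surjective _ Ideal.Quotient.mk_surjective).1 hv
    exact ⟨z, hz, hz2⟩
  set F : A ⧸ Q.asIdeal → A := fun v =>
    if h : ∃ z : A, z ∈ W ∧ Ideal.Quotient.mk Q.asIdeal z = v then h.choose else 0 with hF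
  have hFW : ∀ v ∈ N, F v ∈ W ∧ Ideal.Quotient.mk Q.asIdeal (F v) = v := by
    intro v hv
    have h := hlift v hv
    rw [hF]
    simp only [dif_pos h]
    exact h.choose_spec
  -- for z ∈ W, produce y
  have hy : ∀ z : A, z ∈ W → ∃ y : A, y ∈ K ⊓ pk Q j ∧ d * y = z * x := by
    intro z hz
    rw [hW, Ideal.mem_colon_span_singleton] at hz
    obtain ⟨y, hy1, hy2⟩ := Ideal.mem_span_singleton_mul.1 hz
    exact ⟨y, hy1, hy2⟩
  set G : A ⧸ Q.asIdeal → A := fun v =>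
    if h : ∃ y : A, y ∈ K ⊓ pk Q j ∧ d * y = F v * x then h.choose else 0 with hG
  have hGspec : ∀ v ∈ N, G v ∈ K ⊓ pk Q j ∧ d * G v = F v * x := by
    intro v hv
    have h := hy (F v) (hFW v hv).1
    rw [hG]
    simp only [dif_pos h]
    exact h.choose_spec
  refine ⟨u.image G, ?_, ?_⟩
  · intro a ha
    simp only [Finset.coe_image, Set.mem_image, Finset.mem_coe] at ha
    obtain ⟨v, hv, rfl⟩ := ha
    exact (hGspec v (husub hv)).1
  · intro w hw
    obtain ⟨z, hz⟩ := hdiv w (Ideal.mem_inf.1 hw).2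
    have hzW : z ∈ W := by
      rw [hW, Ideal.mem_colon_span_singleton]
      exact Ideal.mem_span_singleton_mul.2 ⟨w, hw, by rw [hz]; ring⟩
    have hzN : Ideal.Quotient.mk Q.asIdeal z ∈ N := Ideal.mem_map_of_mem _ hzW
    rw [← hu] at hzN
    obtain ⟨cbar, -, hcbar⟩ := Submodule.mem_span_finset.1 hzN
    set c : A ⧸ Q.asIdeal → A := fun v => (Ideal.Quotient.mk_surjective (cbar v)).choose with hc
    have hcs : ∀ v, Ideal.Quotient.mk Q.asIdeal (c v) = cbar v := fun v =>
      (Ideal.Quotient.mk_surjective (cbar v)).choose_spec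
    set zc : A := ∑ v ∈ u, c v * F v with hzc
    have hzzc : z - zc ∈ Q.asIdeal := by
      rw [← Ideal.Quotient.eq, hzc, map_sum]
      rw [← hcbar]
      apply Finset.sum_congr rfl
      intro v hv
      rw [map_mul, hcs v, (hFW v (husub hv)).2]
      rfl
    set wc : A := ∑ v ∈ u, c v * G v with hwc
    have hkey : d * (w - wc) = x * (z - zc) := by
      have hsum : ∀ v ∈ u, d * (c v * G v) = x * (c v * F v) := by
        intro v hv
        have h6 := (hGspec v (husub hv)).2
        calc d * (c v * G v) = c v * (d * G v) := by ring
          _ = c v * (F v * x) := by rw [h6]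
          _ = x * (c v * F v) := by ring
      rw [hwc, hzc, mul_sub, mul_sub, Finset.mul_sum, Finset.mul_sum, hz]
      congr 1
      exact Finset.sum_congr rfl hsum
    have hw' : w - wc ∈ pk Q (j + 1) := by
      have h1 : x * (z - zc) ∈ pk Q (j + 1) := by
        have := mul_mem_pk Q hxe.1 ((mem_pk_one Q).2 hzzc)
        exact this
      rw [← hkey] at h1
      exact (unit_mul_mem_pk_iff Q hdQ _).1 h1
    have hwcK : wc ∈ K ⊓ pk Q j := by
      rw [hwc]
      exact Submodule.sum_mem _ fun v hv => Ideal.mul_mem_left _ _ (hGspec v (husub hv)).1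
    rw [Submodule.mem_sup]
    refine ⟨wc, ?_, w - wc, Ideal.mem_inf.2 ⟨?_, hw'⟩, by ring⟩
    · rw [hwc]
      apply Submodule.sum_mem
      intro v hv
      have : G v ∈ Ideal.span (↑(u.image G) : Set A) :=
        Ideal.subset_span (by simp only [Finset.coe_image]; exact ⟨v, hv, rfl⟩)
      exact Ideal.mul_mem_left _ _ this
    · exact sub_mem ((Ideal.mem_inf.1 hw).1) ((Ideal.mem_inf.1 hwcK).1)

end Main2

end L37

namespace L37

open Pointwise

section Abstract

variable (R : Type*) [CommRing R] {A : Type*} [CommRing A] [Algebra R A]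

/-- finite-type condition for a quotient, phrased inside `A` -/
def TC (I : Ideal A) : Prop :=
  ∃ s : Finset A, ∀ a : A, ∃ c ∈ Algebra.adjoin R (↑s : Set A), a - c ∈ I

/-- finite-module condition for a quotient, phrased inside `A` -/
def MC (I : Ideal A) : Prop :=
  ∃ s : Finset A, ∀ a : A, ∃ c ∈ Submodule.span R (↑s : Set A), a - c ∈ I

variable {R}

theorem TC.of_finiteType {I : Ideal A} (h : Algebra.FiniteType R (A ⧸ I)) : TC R I := by
  classical
  obtain ⟨s', hs'⟩ := h.out
  set ℓ : A ⧸ I → A := fun v => (Ideal.Quotient.mk_surjective v).choose with hℓ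
  have hℓs : ∀ v, Ideal.Quotient.mk I (ℓ v) = v := fun v =>
    (Ideal.Quotient.mk_surjective v).choose_spec
  refine ⟨s'.image ℓ, fun a => ?_⟩
  have h1 : (↑s' : Set (A ⧸ I)) ⊆ (Ideal.Quotient.mkₐ R I) '' ↑(s'.image ℓ) := by
    intro v hv
    exact ⟨ℓ v, by simpa using ⟨v, hv, rfl⟩, hℓs v⟩
  have h0 : Ideal.Quotient.mk I a ∈ Algebra.adjoin R (↑s' : Set (A ⧸ I)) := by
    rw [hs']; trivial
  have h2 := Algebra.adjoin_mono h1 h0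
  rw [Algebra.adjoin_image] at h2
  obtain ⟨c, hc, hc2⟩ := h2
  refine ⟨c, hc, ?_⟩
  have h5 : Ideal.Quotient.mk I c = Ideal.Quotient.mk I a := hc2
  rw [Ideal.Quotient.mk_eq_mk_iff_sub_mem] at h5
  have h6 := I.neg_mem h5
  rwa [neg_sub] at h6

theorem TC.finiteType {I : Ideal A} (h : TC R I) : Algebra.FiniteType R (A ⧸ I) := by
  classical
  obtain ⟨s, hs⟩ := h
  refine ⟨⟨s.image (Ideal.Quotient.mk I), ?_⟩⟩
  rw [eq_top_iff]
  rintro x -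
  obtain ⟨a, rfl⟩ := Ideal.Quotient.mk_surjective x
  obtain ⟨c, hc, hc2⟩ := hs a
  have h7 : Ideal.Quotient.mk I a = Ideal.Quotient.mk I c := by
    rw [Ideal.Quotient.mk_eq_mk_iff_sub_mem]
    exact hc2
  rw [h7]
  have h3 : (Ideal.Quotient.mkₐ R I) c ∈ Algebra.adjoin R
      ((Ideal.Quotient.mkₐ R I) '' ↑s) := by
    rw [Algebra.adjoin_image]
    exact ⟨c, hc, rfl⟩
  simpa using h3

theorem MC.of_finite {I : Ideal A} (h : Module.Finite R (A ⧸ I)) : MC R I := by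
  classical
  obtain ⟨s', hs'⟩ := Module.finite_def.1 h
  set ℓ : A ⧸ I → A := fun v => (Ideal.Quotient.mk_surjective v).choose with hℓ
  have hℓs : ∀ v, Ideal.Quotient.mk I (ℓ v) = v := fun v =>
    (Ideal.Quotient.mk_surjective v).choose_spec
  refine ⟨s'.image ℓ, fun a => ?_⟩
  have h1 : (↑s' : Set (A ⧸ I)) ⊆ (Ideal.Quotient.mkₐ R I).toLinearMap '' ↑(s'.image ℓ) := by
    intro v hv
    exact ⟨ℓ v, by simpa using ⟨v, hv, rfl⟩, hℓs v⟩
  have h2 : Ideal.Quotient.mk I a ∈ Submodule.span R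
      ((Ideal.Quotient.mkₐ R I).toLinearMap '' ↑(s'.image ℓ)) := by
    apply Submodule.span_mono h1
    rw [hs']
    trivial
  rw [← Submodule.map_span] at h2
  obtain ⟨c, hc, hc2⟩ := h2
  refine ⟨c, hc, ?_⟩
  have h5 : Ideal.Quotient.mk I c = Ideal.Quotient.mk I a := hc2
  rw [Ideal.Quotient.mk_eq_mk_iff_sub_mem] at h5
  have h6 := I.neg_mem h5
  rwa [neg_sub] at h6

theorem MC.finite {I : Ideal A} (h : MC R I) : Module.Finite R (A ⧸ I) := by
  classical
  obtain ⟨s, hs⟩ := h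
  rw [Module.finite_def]
  refine ⟨s.image (Ideal.Quotient.mk I), ?_⟩
  rw [eq_top_iff]
  rintro x -
  obtain ⟨a, rfl⟩ := Ideal.Quotient.mk_surjective x
  obtain ⟨c, hc, hc2⟩ := hs a
  have he : Ideal.Quotient.mk I a = Ideal.Quotient.mk I c := by
    rw [Ideal.Quotient.mk_eq_mk_iff_sub_mem]
    exact hc2
  rw [he]
  have h3 : (Ideal.Quotient.mkₐ R I).toLinearMap c ∈ Submodule.span R
      ((Ideal.Quotient.mkₐ R I).toLinearMap '' ↑s) := by
    rw [← Submodule.map_span]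
    exact Submodule.mem_map_of_mem hc
  simpa using h3

theorem TC.step {I J P : Ideal A} (hPI : P * I ≤ J)
    (hfg : ∃ g : Finset A, (↑g : Set A) ⊆ I ∧ I ≤ Ideal.span ↑g ⊔ J)
    (hI : TC R I) (hP : TC R P) : TC R J := by
  classical
  obtain ⟨g, hgI, hgspan⟩ := hfg
  obtain ⟨sI, hsI⟩ := hI
  obtain ⟨sP, hsP⟩ := hP
  refine ⟨sI ∪ sP ∪ g, fun a => ?_⟩
  set C := Algebra.adjoin R (↑(sI ∪ sP ∪ g) : Set A) with hC
  have hsIC : Algebra.adjoin R (↑sI : Set A) ≤ C :=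
    Algebra.adjoin_mono (by intro y hy; simp only [Finset.coe_union]; left; left; exact hy)
  have hsPC : Algebra.adjoin R (↑sP : Set A) ≤ C :=
    Algebra.adjoin_mono (by intro y hy; simp only [Finset.coe_union]; left; right; exact hy)
  have hgC : ∀ y ∈ g, y ∈ C := by
    intro y hy
    apply Algebra.subset_adjoin
    simp only [Finset.coe_union]
    right; exact hy
  obtain ⟨cI, hcI, hcI2⟩ := hsI a
  have h4 := hgspan hcI2
  rw [Submodule.mem_sup] at h4
  obtain ⟨uu, huu, v, hv, huv⟩ := h4
  obtain ⟨co, -, hco⟩ := Submodule.mem_span_finset.1 (show uu ∈ Submodule.span A (↑g : Set A) from huu)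
  -- decompose each coefficient modulo P
  have hdec : ∀ y : A, ∃ cy ∈ C, co y - cy ∈ P := by
    intro y
    obtain ⟨cy, h1, h2⟩ := hsP (co y)
    exact ⟨cy, hsPC h1, h2⟩
  choose cfun hcfun1 hcfun2 using hdec
  refine ⟨cI + ∑ y ∈ g, cfun y * y, ?_, ?_⟩
  · exact C.add_mem (hsIC hcI)
      (Subalgebra.sum_mem _ fun y hy => C.mul_mem (hcfun1 y) (hgC y hy))
  · have key : a - (cI + ∑ y ∈ g, cfun y * y) =
        (∑ y ∈ g, (co y - cfun y) * y) + v + (a - cI - uu - v) := by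
      have hsplit : (∑ y ∈ g, (co y - cfun y) * y) =
          (∑ y ∈ g, co y * y) - (∑ y ∈ g, cfun y * y) := by
        simp only [sub_mul, Finset.sum_sub_distrib]
      have hco' : (∑ y ∈ g, co y * y) = uu := by
        rw [← hco]
        exact Finset.sum_congr rfl fun y _ => by rw [smul_eq_mul]
      rw [hsplit, hco']
      ring
    rw [key]
    have t1 : (∑ y ∈ g, (co y - cfun y) * y) ∈ J :=
      Submodule.sum_mem _ fun y hy => hPI (Ideal.mul_mem_mul (hcfun2 y) (hgI hy))
    have t3 : a - cI - uu - v = 0 := by rw [← huv]; ring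
    rw [t3, add_zero]
    exact J.add_mem t1 hv

theorem MC.step {I J P : Ideal A} (hPI : P * I ≤ J)
    (hfg : ∃ g : Finset A, (↑g : Set A) ⊆ I ∧ I ≤ Ideal.span ↑g ⊔ J)
    (hI : MC R I) (hP : MC R P) : MC R J := by
  classical
  obtain ⟨g, hgI, hgspan⟩ := hfg
  obtain ⟨sI, hsI⟩ := hI
  obtain ⟨sP, hsP⟩ := hP
  refine ⟨sI ∪ sP * g, fun a => ?_⟩
  set C := Submodule.span R (↑(sI ∪ sP * g) : Set A) with hC
  have hsIC : Submodule.span R (↑sI : Set A) ≤ C :=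
    Submodule.span_mono (by intro y hy; simp only [Finset.coe_union]; left; exact hy)
  have hsPgC : Submodule.span R (↑(sP * g) : Set A) ≤ C :=
    Submodule.span_mono (by intro y hy; simp only [Finset.coe_union]; right; exact hy)
  obtain ⟨cI, hcI, hcI2⟩ := hsI a
  have h4 := hgspan hcI2
  rw [Submodule.mem_sup] at h4
  obtain ⟨uu, huu, v, hv, huv⟩ := h4
  obtain ⟨co, -, hco⟩ := Submodule.mem_span_finset.1 (show uu ∈ Submodule.span A (↑g : Set A) from huu)
  have hdec : ∀ y : A, ∃ cy ∈ Submodule.span R (↑sP : Set A), co y - cy ∈ P :=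
    fun y => hsP (co y)
  choose cfun hcfun1 hcfun2 using hdec
  have hprod : ∀ y ∈ g, cfun y * y ∈ C := by
    intro y hy
    apply hsPgC
    rw [Finset.coe_mul, ← Submodule.span_mul_span R]
    exact Submodule.mul_mem_mul (hcfun1 y) (Submodule.subset_span hy)
  refine ⟨cI + ∑ y ∈ g, cfun y * y, ?_, ?_⟩
  · exact C.add_mem (hsIC hcI) (Submodule.sum_mem _ hprod)
  · have key : a - (cI + ∑ y ∈ g, cfun y * y) =
        (∑ y ∈ g, (co y - cfun y) * y) + v + (a - cI - uu - v) := by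
      have hsplit : (∑ y ∈ g, (co y - cfun y) * y) =
          (∑ y ∈ g, co y * y) - (∑ y ∈ g, cfun y * y) := by
        simp only [sub_mul, Finset.sum_sub_distrib]
      have hco' : (∑ y ∈ g, co y * y) = uu := by
        rw [← hco]
        exact Finset.sum_congr rfl fun y _ => by rw [smul_eq_mul]
      rw [hsplit, hco']
      ring
    rw [key]
    have t1 : (∑ y ∈ g, (co y - cfun y) * y) ∈ J :=
      Submodule.sum_mem _ fun y hy => hPI (Ideal.mul_mem_mul (hcfun2 y) (hgI hy))
    have t3 : a - cI - uu - v = 0 := by rw [← huv]; ring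
    rw [t3, add_zero]
    exact J.add_mem t1 hv

theorem TC.top : TC R (⊤ : Ideal A) := ⟨∅, fun a => ⟨0, Subalgebra.zero_mem _, trivial⟩⟩

theorem MC.top : MC R (⊤ : Ideal A) := ⟨∅, fun a => ⟨0, Submodule.zero_mem _, trivial⟩⟩

end Abstract

end L37

namespace L37

variable {A : Type*} [CommRing A] [IsDomain A]

theorem mul_inf_pk_le (Q : PrimeSpectrum A) (K : Ideal A) (j : ℕ) :
    Q.asIdeal * (K ⊓ pk Q j) ≤ K ⊓ pk Q (j + 1) := by
  rw [Ideal.mul_le]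
  intro r hr s hs
  refine Ideal.mem_inf.2 ⟨K.mul_mem_left _ (Ideal.mem_inf.1 hs).1, ?_⟩
  have := mul_mem_pk Q ((mem_pk_one Q).2 hr) (Ideal.mem_inf.1 hs).2
  rwa [add_comm] at this

theorem chain {π : A}
    (good : Ideal A → Prop)
    (hgood_top : good ⊤)
    (hstep : ∀ Q : PrimeSpectrum A, Order.height Q = 1 → π ∈ Q.asIdeal →
      ∀ (K : Ideal A) (j : ℕ), good (K ⊓ pk Q j) → good (K ⊓ pk Q (j + 1)))
    (e : PrimeSpectrum A → ℕ) :
    ∀ s : Finset (PrimeSpectrum A), (∀ Q ∈ s, Order.height Q = 1 ∧ π ∈ Q.asIdeal) →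
      good (s.inf fun Q => pk Q (e Q)) := by
  classical
  intro s
  induction s using Finset.induction_on with
  | empty => intro _; rw [Finset.inf_empty]; exact hgood_top
  | @insert Q s hQs ih =>
    intro hcond
    have hK : good (s.inf fun Q => pk Q (e Q)) :=
      ih fun Q' hQ' => hcond Q' (Finset.mem_insert_of_mem hQ')
    obtain ⟨hQ1, hQ2⟩ := hcond Q (Finset.mem_insert_self Q s)
    set K := s.inf fun Q => pk Q (e Q) with hKdef
    have hinner : ∀ j : ℕ, good (K ⊓ pk Q j) := by
      intro j
      induction j with
      | zero => rw [pk_zero, inf_top_eq]; exact hK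
      | succ n ihn => exact hstep Q hQ1 hQ2 K n ihn
    rw [Finset.inf_insert, inf_comm]
    exact hinner (e Q)

end L37

section FinalAssembly

open L37

universe v

theorem final_main
    (R A : Type v) [CommRing R] [IsDomain R] [IsNoetherianRing R]
    [CommRing A] [IsDomain A] [Algebra R A]
    (hK1 : ∀ P : PrimeSpectrum A, Order.height P = 1 →
      IsDiscreteValuationRing (Localization.AtPrime P.asIdeal))
    (hK2 : ∀ x : FractionRing A,
      (∀ P : PrimeSpectrum A, Order.height P = 1 →
        ∃ a s : A, s ∉ P.asIdeal ∧
          algebraMap A (FractionRing A) s * x = algebraMap A (FractionRing A) a) →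
      ∃ a : A, algebraMap A (FractionRing A) a = x)
    (hK3 : ∀ a : A, a ≠ 0 →
      {P : PrimeSpectrum A | Order.height P = 1 ∧ a ∈ P.asIdeal}.Finite)
    (π : A) (hπ0 : π ≠ 0) :
    ((∀ P ∈ associatedPrimes A (A ⧸ Ideal.span {π}), Algebra.FiniteType R (A ⧸ P)) →
      Algebra.FiniteType R (A ⧸ Ideal.span {π})) ∧
    ((∀ P ∈ associatedPrimes A (A ⧸ Ideal.span {π}), Module.Finite R (A ⧸ P)) →
      Module.Finite R (A ⧸ Ideal.span {π})) := by
  classical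
  set e : PrimeSpectrum A → ℕ := fun Q =>
    if h : ∃ k, VExact Q π k then h.choose else 0 with hedef
  have he : ∀ Q : PrimeSpectrum A, Order.height Q = 1 → π ∈ Q.asIdeal →
      VExact Q π (e Q) := by
    intro Q hQ _
    haveI := hK1 Q hQ
    have h : ∃ k, VExact Q π k := exists_vexact Q hπ0
    rw [hedef]
    simp only [dif_pos h]
    exact h.choose_spec
  set S : Finset (PrimeSpectrum A) := (hK3 π hπ0).toFinset with hSdef
  have hmemS : ∀ Q : PrimeSpectrum A, Q ∈ S ↔ Order.height Q = 1 ∧ π ∈ Q.asIdeal := by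
    intro Q; rw [hSdef, Set.Finite.mem_toFinset]; rfl
  have hspan : Ideal.span {π} = S.inf fun Q => pk Q (e Q) := by
    ext a
    rw [mem_span_pi_iff hK1 hK2 hπ0 e he, Submodule.mem_finsetInf]
    constructor
    · intro h Q hQ
      obtain ⟨h1, h2⟩ := (hmemS Q).1 hQ
      exact h Q h1 h2
    · intro h Q h1 h2
      exact h Q ((hmemS Q).2 ⟨h1, h2⟩)
  constructor
  · intro hyp
    have hstep : ∀ Q : PrimeSpectrum A, Order.height Q = 1 → π ∈ Q.asIdeal →
        ∀ (K : Ideal A) (j : ℕ), TC R (K ⊓ pk Q j) → TC R (K ⊓ pk Q (j + 1)) := by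
      intro Q hQ1 hQ2 K j hgood
      have hass := mem_ass hK1 hK2 hπ0 e he hK3 hQ1 hQ2
      have hft : Algebra.FiniteType R (A ⧸ Q.asIdeal) := hyp _ hass
      haveI := hft
      have hnoeth : IsNoetherianRing (A ⧸ Q.asIdeal) :=
        Algebra.FiniteType.isNoetherianRing R _
      obtain ⟨g, hg1, hg2⟩ := geo_step hK1 hK2 hK3 hQ1 hnoeth K j
      exact TC.step (mul_inf_pk_le Q K j) ⟨g, hg1, hg2⟩ hgood (TC.of_finiteType hft)
    have hgood := chain (TC R) TC.top hstep e S fun Q hQ => (hmemS Q).1 hQ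
    rw [← hspan] at hgood
    exact hgood.finiteType
  · intro hyp
    have hstep : ∀ Q : PrimeSpectrum A, Order.height Q = 1 → π ∈ Q.asIdeal →
        ∀ (K : Ideal A) (j : ℕ), MC R (K ⊓ pk Q j) → MC R (K ⊓ pk Q (j + 1)) := by
      intro Q hQ1 hQ2 K j hgood
      have hass := mem_ass hK1 hK2 hπ0 e he hK3 hQ1 hQ2
      have hfin : Module.Finite R (A ⧸ Q.asIdeal) := hyp _ hass
      haveI := hfin
      haveI : IsNoetherian R (A ⧸ Q.asIdeal) :=
        isNoetherian_of_isNoetherianRing_of_finite R _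
      have hnoeth : IsNoetherianRing (A ⧸ Q.asIdeal) :=
        isNoetherian_of_tower R inferInstance
      obtain ⟨g, hg1, hg2⟩ := geo_step hK1 hK2 hK3 hQ1 hnoeth K j
      exact MC.step (mul_inf_pk_le Q K j) ⟨g, hg1, hg2⟩ hgood (MC.of_finite hfin)
    have hgood := chain (MC R) MC.top hstep e S fun Q hQ => (hmemS Q).1 hQ
    rw [← hspan] at hgood
    exact hgood.finite

end FinalAssembly


/-- Lemma 3.7: finite generation (resp. finiteness) of `A/πA` from that of the `A/P` for the
associated primes `P` of `A/πA`, for a Krull domain `A` over a Noetherian domain `R`. -/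
theorem quotient_span_finiteType_of_quotient_associatedPrimes
    (R A : Type u) [CommRing R] [IsDomain R] [IsNoetherianRing R]
    [CommRing A] [IsDomain A] [Algebra R A]
    (hinj : Function.Injective (algebraMap R A))
    (hKrull : IsKrullDomain A)
    (π : A) (hπ0 : π ≠ 0) (hπ1 : Ideal.span {π} ≠ ⊤) :
    ((∀ P ∈ associatedPrimes A (A ⧸ Ideal.span {π}), Algebra.FiniteType R (A ⧸ P)) →
      Algebra.FiniteType R (A ⧸ Ideal.span {π})) ∧
    ((∀ P ∈ associatedPrimes A (A ⧸ Ideal.span {π}), Module.Finite R (A ⧸ P)) →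
      Module.Finite R (A ⧸ Ideal.span {π})) := by
  obtain ⟨hK1, hK2, hK3⟩ := hKrull
  exact final_main R A hK1 hK2 hK3 π hπ0
end

section
/- Let (S, n) be a one-dimensional local domain and B an integral domain containing S such that nB = B and trdeg_S B = 0. Then B is a field. -/
universe u

open Polynomial in
lemma aux_exists_coeff_zero_ne {S B : Type*} [CommRing S] [CommRing B] [IsDomain B]
    (f : S →+* B) (b : B) (hb : b ≠ 0) :
    ∀ (n : ℕ) (p : Polynomial S), p.natDegree ≤ n → p ≠ 0 → Polynomial.eval₂ f b p = 0 →
      ∃ q : Polynomial S, q.coeff 0 ≠ 0 ∧ Polynomial.eval₂ f b q = 0 := by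
  intro n
  induction n with
  | zero =>
    intro p hdeg hp0 hev
    refine ⟨p, ?_, hev⟩
    intro h0
    apply hp0
    have := Polynomial.eq_C_of_natDegree_eq_zero (Nat.le_zero.mp hdeg)
    rw [this, h0, map_zero]
  | succ n ih =>
    intro p hdeg hp0 hev
    by_cases h0 : p.coeff 0 = 0
    · have hpx : p = Polynomial.X * p.divX := by
        conv_lhs => rw [← Polynomial.X_mul_divX_add p]
        rw [h0, map_zero, add_zero]
      have hdvx0 : p.divX ≠ 0 := by
        intro h; apply hp0; rw [hpx, h, mul_zero]
      have hev' : Polynomial.eval₂ f b p.divX = 0 := by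
        rw [hpx, Polynomial.eval₂_mul, Polynomial.eval₂_X] at hev
        rcases mul_eq_zero.mp hev with h | h
        · exact absurd h hb
        · exact h
      refine ih p.divX ?_ hdvx0 hev'
      have := Polynomial.natDegree_divX_eq_natDegree_tsub_one (p := p)
      omega
    · exact ⟨p, h0, hev⟩


/-- Lemma 3.12: a domain of transcendence degree zero over a one-dimensional local domain,
in which the maximal ideal generates the unit ideal, is a field. -/
theorem isField_of_trdeg_zero_of_map_maximalIdeal_eq_top
    (S B : Type u) [CommRing S] [IsDomain S] [IsLocalRing S]
    (hdim : ringKrullDim S = 1)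
    [CommRing B] [IsDomain B] [Algebra S B]
    (hinj : Function.Injective (algebraMap S B))
    (hnB : Ideal.map (algebraMap S B) (IsLocalRing.maximalIdeal S) = ⊤)
    (htr : trdegHom (algebraMap S B) = 0) :
    IsField B := by
  classical
  set f : S →+* B := algebraMap S B with hf
  -- Step A: every element of B is algebraic over S (via f)
  have halg : ∀ b : B, ∃ p : Polynomial S, p ≠ 0 ∧ Polynomial.eval₂ f b p = 0 := by
    intro b
    by_contra h
    push_neg at h
    letI : Algebra S B := f.toAlgebra
    have htrans : Transcendental S b := by
      rintro ⟨p, hp0, hp⟩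
      exact h p hp0 (by rwa [Polynomial.aeval_def] at hp)
    have hindep : AlgebraicIndependent S ((↑) : ({b} : Set B) → B) := by
      rw [algebraicIndependent_unique_type_iff]
      exact htrans
    unfold trdegHom at htr
    rw [Cardinal.toENat_eq_zero] at htr
    have hbdd : BddAbove (Set.range fun s : {s : Set B // AlgebraicIndependent S ((↑) : s → B)} =>
        Cardinal.mk s.1) := by
      refine ⟨Cardinal.mk B, ?_⟩
      rintro c ⟨s, rfl⟩
      exact Cardinal.mk_set_le s.1
    have hle : Cardinal.mk ({b} : Set B) ≤ 0 := by
      rw [← htr]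
      exact le_ciSup hbdd ⟨({b} : Set B), hindep⟩
    simp at hle
  -- Step C: primes of B contract to ⊥
  have hcomap : ∀ P : Ideal B, P.IsPrime → Ideal.comap f P = ⊥ := by
    intro P hP
    have hle : Ideal.comap f P ≤ IsLocalRing.maximalIdeal S :=
      IsLocalRing.le_maximalIdeal (Ideal.comap_ne_top f hP.ne_top)
    have hne : Ideal.comap f P ≠ IsLocalRing.maximalIdeal S := by
      intro h
      have hmap : Ideal.map f (IsLocalRing.maximalIdeal S) ≤ P := by
        rw [← h]; exact Ideal.map_comap_le
      rw [hnB] at hmap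
      exact hP.ne_top (top_le_iff.mp hmap)
    by_contra hne0
    have h1 : (⊥ : Ideal S) < Ideal.comap f P := bot_lt_iff_ne_bot.mpr hne0
    have h2 : Ideal.comap f P < IsLocalRing.maximalIdeal S := lt_of_le_of_ne hle hne
    let p0 : PrimeSpectrum S := ⟨⊥, Ideal.bot_prime⟩
    let p1 : PrimeSpectrum S := ⟨Ideal.comap f P, hP.comap f⟩
    let p2 : PrimeSpectrum S := ⟨IsLocalRing.maximalIdeal S, inferInstance⟩
    let c : LTSeries (PrimeSpectrum S) :=
      { length := 2
        toFun := ![p0, p1, p2]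
        step := by
          intro i
          fin_cases i
          · exact (PrimeSpectrum.asIdeal_lt_asIdeal p0 p1).mp h1
          · exact (PrimeSpectrum.asIdeal_lt_asIdeal p1 p2).mp h2 }
    have hlen := Order.LTSeries.length_le_krullDim c
    rw [show Order.krullDim (PrimeSpectrum S) = ringKrullDim S from rfl, hdim] at hlen
    norm_num [c] at hlen
  -- Step D: conclude
  refine ⟨exists_pair_ne B, mul_comm, ?_⟩
  intro b hb
  by_cases hsp : Ideal.span {b} = ⊤
  · obtain ⟨c, hc⟩ := (Ideal.span_singleton_eq_top.mp hsp).exists_right_inv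
    exact ⟨c, hc⟩
  · obtain ⟨M, hM, hle⟩ := Ideal.exists_le_maximal _ hsp
    exfalso
    have hbM : b ∈ M := hle (Ideal.subset_span rfl)
    obtain ⟨p, hp0, hev⟩ := halg b
    obtain ⟨q, hq0, hqev⟩ := aux_exists_coeff_zero_ne f b hb p.natDegree p le_rfl hp0 hev
    have hfq : f (q.coeff 0) ∈ M := by
      have hq : Polynomial.X * q.divX + Polynomial.C (q.coeff 0) = q :=
        Polynomial.X_mul_divX_add q
      have : b * Polynomial.eval₂ f b q.divX + f (q.coeff 0) = 0 := by
        rw [← hqev]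
        conv_rhs => rw [← hq]
        rw [Polynomial.eval₂_add, Polynomial.eval₂_mul, Polynomial.eval₂_X,
          Polynomial.eval₂_C]
      have hfeq : f (q.coeff 0) = -(b * Polynomial.eval₂ f b q.divX) := by linear_combination this
      rw [hfeq]
      exact M.neg_mem (M.mul_mem_right _ hbM)
    have : q.coeff 0 ∈ Ideal.comap f M := hfq
    rw [hcomap M hM.isPrime] at this
    exact hq0 (Ideal.mem_bot.mp this)
end

section
/- Let (R, m) be a two-dimensional local domain and A a Krull domain with R ⊆ A, mA = A, and trdeg_R A > 0. Let π be a nonzero element of m and let P be a minimal prime ideal of πA. Suppose that trdeg_{R/(P∩R)} A/P = 0. Then A/P is a field. -/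
universe u

/-- Corollary 3.13: for a Krull domain `A` over a two-dimensional local domain `R` with
`mA = A` and positive transcendence degree, the quotient by a minimal prime of `πA` with
algebraic residue extension is a field. -/
theorem isField_quotient_minimalPrime_of_trdeg_zero
    (R A : Type u) [CommRing R] [IsDomain R] [IsLocalRing R]
    (hdim : ringKrullDim R = 2)
    [CommRing A] [IsDomain A] [Algebra R A]
    (hinj : Function.Injective (algebraMap R A))
    (hKrull : IsKrullDomain A)
    (hmA : Ideal.map (algebraMap R A) (IsLocalRing.maximalIdeal R) = ⊤)
    (htr : 0 < trdegHom (algebraMap R A))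
    (π : R) (hπ0 : π ≠ 0) (hπm : π ∈ IsLocalRing.maximalIdeal R)
    (P : Ideal A) (hP : P ∈ (Ideal.span {algebraMap R A π}).minimalPrimes)
    (htrP : trdegHom (Ideal.quotientMap P (algebraMap R A) le_rfl) = 0) :
    IsField (A ⧸ P) := by
  have hPprime : P.IsPrime := hP.1.1
  set q0 : Ideal R := P.comap (algebraMap R A) with hq0
  haveI hq0prime : q0.IsPrime := hPprime.comap _
  have hπq0 : π ∈ q0 := hP.1.2 (Ideal.subset_span rfl)
  have hq0bot : q0 ≠ ⊥ := fun h => hπ0 (by simpa [h] using hπq0)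
  letI : Algebra (R ⧸ q0) (A ⧸ P) := (Ideal.quotientMap P (algebraMap R A) le_rfl).toAlgebra
  have halgmap : (algebraMap (R ⧸ q0) (A ⧸ P)) = Ideal.quotientMap P (algebraMap R A) le_rfl := rfl
  -- every element of A ⧸ P is algebraic over R ⧸ q0
  have halg : ∀ b : A ⧸ P, IsAlgebraic (R ⧸ q0) b := by
    intro b
    by_contra hb
    have hai : AlgebraicIndependent (R ⧸ q0) ((↑) : ({b} : Set (A ⧸ P)) → (A ⧸ P)) := by
      rw [algebraicIndependent_unique_type_iff]
      exact hb
    have h1 : (1 : Cardinal) ≤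
        (⨆ s : {s : Set (A ⧸ P) //
            AlgebraicIndependent (R ⧸ q0) ((↑) : s → (A ⧸ P))}, Cardinal.mk s.1) := by
      have := le_ciSup (Cardinal.bddAbove_range (fun s : {s : Set (A ⧸ P) //
            AlgebraicIndependent (R ⧸ q0) ((↑) : s → (A ⧸ P))} => Cardinal.mk s.1)) ⟨{b}, hai⟩
      simpa using this
    have h0 := htrP
    unfold trdegHom at h0
    rw [Cardinal.toENat_eq_zero] at h0
    rw [h0] at h1
    exact absurd h1 (by norm_num)
  -- now prove the field property
  by_contra hfield
  obtain ⟨Q, hQ0, hQprime⟩ := Ring.not_isField_iff_exists_prime.mp hfield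
  haveI := hQprime
  obtain ⟨x, hxQ, hx0⟩ := Submodule.exists_mem_ne_zero_of_ne_bot hQ0
  have hQ' : Q.comap (algebraMap (R ⧸ q0) (A ⧸ P)) ≠ ⊥ :=
    Ideal.comap_ne_bot_of_algebraic_mem hx0 hxQ (halg x)
  obtain ⟨y, hyQ', hy0⟩ := Submodule.exists_mem_ne_zero_of_ne_bot hQ'
  obtain ⟨r, rfl⟩ := Ideal.Quotient.mk_surjective y
  have hrq0 : r ∉ q0 := fun h => hy0 (Ideal.Quotient.eq_zero_iff_mem.mpr h)
  have hrQ : Ideal.Quotient.mk P (algebraMap R A r) ∈ Q := by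
    have : algebraMap (R ⧸ q0) (A ⧸ P) (Ideal.Quotient.mk q0 r) ∈ Q := hyQ'
    rwa [halgmap, Ideal.quotientMap_mk] at this
  -- the contraction of Q to R
  set q : Ideal R := Q.comap ((Ideal.Quotient.mk P).comp (algebraMap R A)) with hq
  haveI hqprime : q.IsPrime := hQprime.comap _
  have hq0q : q0 < q := by
    constructor
    · intro s hs
      have : algebraMap R A s ∈ P := hs
      show Ideal.Quotient.mk P (algebraMap R A s) ∈ Q
      rw [Ideal.Quotient.eq_zero_iff_mem.mpr this]
      exact Q.zero_mem
    · intro hle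
      exact hrq0 (hle hrQ)
  have hqm : q ≤ IsLocalRing.maximalIdeal R := IsLocalRing.le_maximalIdeal hqprime.ne_top
  by_cases hmq : IsLocalRing.maximalIdeal R ≤ q
  · -- then mA ⊆ comap of Q, contradicting mA = ⊤
    have : Ideal.map (algebraMap R A) (IsLocalRing.maximalIdeal R) ≤
        Q.comap (Ideal.Quotient.mk P) := by
      rw [Ideal.map_le_iff_le_comap]
      intro s hs
      exact hmq hs
    rw [hmA, top_le_iff] at this
    have h1 : (1 : A ⧸ P) ∈ Q := by
      have : (1 : A) ∈ Q.comap (Ideal.Quotient.mk P) := by rw [this]; trivial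
      simpa using this
    exact hQprime.ne_top (Ideal.eq_top_iff_one Q |>.mpr h1)
  · -- chain of primes of length 3, contradicting dim R = 2
    have hqmlt : q < IsLocalRing.maximalIdeal R := lt_of_le_of_ne hqm (fun h => hmq h.ge)
    have hbotq0 : (⊥ : Ideal R) < q0 := bot_lt_iff_ne_bot.mpr hq0bot
    let c : LTSeries (PrimeSpectrum R) :=
      ⟨3, ![⟨⊥, Ideal.bot_prime⟩, ⟨q0, hq0prime⟩, ⟨q, hqprime⟩,
            ⟨IsLocalRing.maximalIdeal R, inferInstance⟩], by
        intro i
        fin_cases i <;>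
          simp only [Fin.castSucc, Fin.succ, Matrix.cons_val_zero, Matrix.cons_val_one,
            Matrix.head_cons] <;>
          rw [Set.mem_setOf_eq, ← PrimeSpectrum.asIdeal_lt_asIdeal] <;>
          first
          | exact hbotq0
          | exact hq0q
          | exact hqmlt⟩
    have hlen := Order.LTSeries.length_le_krullDim c
    rw [show Order.krullDim (PrimeSpectrum R) = ringKrullDim R from rfl, hdim] at hlen
    have : c.length = 3 := rfl
    rw [this] at hlen
    norm_num at hlen
end

section
/- Let R be a two-dimensional regular local ring and {π₁, π₂} a regular system of parameters of R (i.e., π₁, π₂ generate the maximal ideal of R). Let M be a torsion-free R-module such that π₂ is a regular element on M/π₁M (multiplication by π₂ on M/π₁M is injective). Then M is flat over R. -/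
universe u

open Ideal IsLocalRing LinearMap TensorProduct


section AuxPrincipal

variable {A : Type*} [CommRing A] [IsLocalRing A] [IsNoetherianRing A]

/-- In a Noetherian local ring whose maximal ideal is generated by a single element,
every ideal is principal. -/
lemma aux_ideal_principal (t : A) (hmax : maximalIdeal A = Ideal.span {t})
    (J : Ideal A) : ∃ g : A, J = Ideal.span {g} := by
  classical
  by_cases hb : ∃ n : ℕ, ¬ J ≤ maximalIdeal A ^ n
  · set n := Nat.find hb with hn
    have hnot : ¬ J ≤ maximalIdeal A ^ n := Nat.find_spec hb
    have hn0 : n ≠ 0 := by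
      intro h
      rw [h, pow_zero, Ideal.one_eq_top] at hnot
      exact hnot le_top
    obtain ⟨k, hk⟩ : ∃ k, n = k + 1 :=
      ⟨n - 1, (Nat.succ_pred_eq_of_pos (Nat.pos_of_ne_zero hn0)).symm⟩
    have hle : J ≤ maximalIdeal A ^ k := by
      by_contra hcon
      have := Nat.find_min' hb hcon
      omega
    obtain ⟨x, hxJ, hxn⟩ := SetLike.not_le_iff_exists.mp hnot
    have hxk : x ∈ Ideal.span {t ^ k} := by
      rw [← Ideal.span_singleton_pow, ← hmax]; exact hle hxJ
    obtain ⟨y, hy⟩ := Ideal.mem_span_singleton'.mp hxk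
    have hyu : IsUnit y := by
      by_contra hyu
      apply hxn
      have hym : y ∈ maximalIdeal A := hyu
      rw [hmax] at hym
      obtain ⟨z, hz⟩ := Ideal.mem_span_singleton'.mp hym
      have : x ∈ Ideal.span {t ^ n} := by
        refine Ideal.mem_span_singleton'.mpr ⟨z, ?_⟩
        rw [hk, pow_succ, ← hy, ← hz]
        ring
      rwa [← Ideal.span_singleton_pow, ← hmax] at this
    refine ⟨t ^ k, le_antisymm ?_ ?_⟩
    · rw [← Ideal.span_singleton_pow, ← hmax]; exact hle
    · rw [Ideal.span_singleton_le_iff_mem]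
      have : t ^ k = ↑hyu.unit⁻¹ * x := by
        rw [← hy, ← mul_assoc, IsUnit.val_inv_mul, one_mul]
      rw [this]
      exact J.mul_mem_left _ hxJ
  · push_neg at hb
    refine ⟨0, ?_⟩
    have : J ≤ ⨅ n : ℕ, maximalIdeal A ^ n := le_iInf hb
    rw [Ideal.iInf_pow_eq_bot_of_isLocalRing _ (maximalIdeal.isMaximal A).ne_top] at this
    rw [le_bot_iff] at this
    rw [this, Ideal.span_singleton_eq_bot.mpr rfl]

/-- A prime ideal not containing one of the two generators of the maximal ideal is principal. -/
lemma aux_prime_principal (π π' : A)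
    (hm : maximalIdeal A = Ideal.span {π, π'}) (I : Ideal A) (hI : I.IsPrime)
    (hπ : π ∉ I) : ∃ g : A, I = Ideal.span {g} := by
  set Iπ : Ideal A := Ideal.span {π} with hIπ
  have hπm : π ∈ maximalIdeal A := by
    rw [hm]; exact Ideal.subset_span (by simp)
  have hπ'm : π' ∈ maximalIdeal A := by
    rw [hm]; exact Ideal.subset_span (by simp)
  have hIπm : Iπ ≤ maximalIdeal A := by
    rw [hIπ, Ideal.span_singleton_le_iff_mem]; exact hπm
  have hIπtop : Iπ ≠ ⊤ := fun h => (maximalIdeal.isMaximal A).ne_top (top_le_iff.mp (h ▸ hIπm))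
  haveI : Nontrivial (A ⧸ Iπ) := Ideal.Quotient.nontrivial_iff.mpr hIπtop
  haveI : IsLocalRing (A ⧸ Iπ) :=
    IsLocalRing.of_surjective' (Ideal.Quotient.mk Iπ) Ideal.Quotient.mk_surjective
  -- the maximal ideal of the quotient
  have hmaxQ : maximalIdeal (A ⧸ Iπ) = Ideal.span {Ideal.Quotient.mk Iπ π'} := by
    have h1 : maximalIdeal (A ⧸ Iπ) = (maximalIdeal A).map (Ideal.Quotient.mk Iπ) := by
      apply le_antisymm
      · intro xb hxb
        obtain ⟨x, rfl⟩ := Ideal.Quotient.mk_surjective xb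
        by_cases hxm : x ∈ maximalIdeal A
        · exact Ideal.mem_map_of_mem _ hxm
        · have hxu : IsUnit x := by
            by_contra hxu
            exact hxm hxu
          exact absurd (hxu.map (Ideal.Quotient.mk Iπ)) hxb
      · rw [Ideal.map_le_iff_le_comap]
        intro x hx
        show Ideal.Quotient.mk Iπ x ∈ maximalIdeal (A ⧸ Iπ)
        rw [IsLocalRing.mem_maximalIdeal, mem_nonunits_iff]
        intro hu
        obtain ⟨b, hb⟩ := hu.exists_right_inv
        obtain ⟨c, rfl⟩ := Ideal.Quotient.mk_surjective b
        rw [← _root_.map_mul, ← map_one (Ideal.Quotient.mk Iπ),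
          Ideal.Quotient.mk_eq_mk_iff_sub_mem] at hb
        have h1m : (1 : A) ∈ maximalIdeal A := by
          have h2 : x * c ∈ maximalIdeal A := (maximalIdeal A).mul_mem_right c hx
          simpa using sub_mem h2 (hIπm hb)
        exact (maximalIdeal.isMaximal A).ne_top ((Ideal.eq_top_iff_one _).mpr h1m)
    rw [h1, hm, Ideal.map_span, Set.image_pair]
    have : Ideal.Quotient.mk Iπ π = 0 := Ideal.Quotient.eq_zero_iff_mem.mpr (Ideal.subset_span rfl)
    rw [this]
    exact Submodule.span_insert_zero
  obtain ⟨gb, hgb⟩ := aux_ideal_principal _ hmaxQ (I.map (Ideal.Quotient.mk Iπ))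
  have hgbmem : gb ∈ I.map (Ideal.Quotient.mk Iπ) := by rw [hgb]; exact Ideal.subset_span rfl
  obtain ⟨f, hfI, hf⟩ :=
    (Ideal.mem_map_iff_of_surjective _ Ideal.Quotient.mk_surjective).mp hgbmem
  set S : Ideal A := Ideal.span {f} with hS
  have hSI : S ≤ I := by rw [hS, Ideal.span_singleton_le_iff_mem]; exact hfI
  set N := Submodule.map S.mkQ (I : Submodule A A) with hN
  have hNle : N ≤ (maximalIdeal A) • N := by
    rintro _ ⟨a, haI, rfl⟩
    have hma : Ideal.Quotient.mk Iπ a ∈ I.map (Ideal.Quotient.mk Iπ) := Ideal.mem_map_of_mem _ haI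
    rw [hgb] at hma
    obtain ⟨rb, hrb⟩ := Ideal.mem_span_singleton'.mp hma
    obtain ⟨r, rfl⟩ := Ideal.Quotient.mk_surjective rb
    have hsub : a - r * f ∈ Iπ := by
      rw [← Ideal.Quotient.eq_zero_iff_mem, map_sub, _root_.map_mul, hf, hrb, sub_self]
    obtain ⟨y, hy⟩ := Ideal.mem_span_singleton'.mp hsub
    have hyI : y ∈ I := by
      have hyπ : y * π ∈ I := by rw [hy]; exact sub_mem haI (I.mul_mem_left r hfI)
      rcases hI.mem_or_mem hyπ with h | h
      · exact h
      · exact absurd h hπ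
    have hq : S.mkQ a = π • S.mkQ y := by
      rw [← map_smul]
      rw [show π • y = a - r * f by rw [smul_eq_mul, mul_comm]; exact hy]
      rw [map_sub]
      have hz : S.mkQ (r * f) = 0 := by
        rw [Submodule.mkQ_apply, Submodule.Quotient.mk_eq_zero]
        exact Ideal.mem_span_singleton'.mpr ⟨r, rfl⟩
      rw [hz, sub_zero]
    rw [hq]
    exact Submodule.smul_mem_smul hπm (Submodule.mem_map_of_mem hyI)
  have hNbot : N = ⊥ := Submodule.eq_bot_of_le_smul_of_le_jacobson_bot (maximalIdeal A) N
    ((IsNoetherian.noetherian (I : Submodule A A)).map _) hNle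
    (jacobson_eq_maximalIdeal ⊥ bot_ne_top).ge
  refine ⟨f, le_antisymm ?_ hSI⟩
  intro a ha
  have hmem : S.mkQ a ∈ N := Submodule.mem_map_of_mem ha
  rw [hNbot, Submodule.mem_bot] at hmem
  rwa [Submodule.mkQ_apply, Submodule.Quotient.mk_eq_zero] at hmem

end AuxPrincipal

lemma aux_param_ne_zero {A : Type*} [CommRing A] [IsLocalRing A] [IsNoetherianRing A]
    (hdim : ringKrullDim A = 2) (π π' : A)
    (hm : maximalIdeal A = Ideal.span {π, π'}) : π ≠ 0 := by
  intro h0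
  subst h0
  have hm' : maximalIdeal A = Ideal.span {π'} := by
    rw [hm]
    exact Submodule.span_insert_zero
  -- extract a chain of primes of length 2
  have hex : ∃ p : LTSeries (PrimeSpectrum A), 2 ≤ p.length := by
    by_contra hc
    push_neg at hc
    have hle : ringKrullDim A ≤ 1 := by
      refine iSup_le fun p => ?_
      have := hc p
      have h1 : p.length ≤ 1 := by omega
      exact_mod_cast h1
    rw [hdim] at hle
    norm_num at hle
  obtain ⟨p, hp⟩ := hex
  set P0 := p ⟨0, by omega⟩ with hP0
  set P1 := p ⟨1, by omega⟩ with hP1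
  set P2 := p ⟨2, by omega⟩ with hP2
  have h01 : P0 < P1 := p.strictMono (by rw [Fin.mk_lt_mk]; omega)
  have h12 : P1 < P2 := p.strictMono (by rw [Fin.mk_lt_mk]; omega)
  have h01' : P0.asIdeal < P1.asIdeal := h01
  have h12' : P1.asIdeal < P2.asIdeal := h12
  have hπ'P1 : π' ∉ P1.asIdeal := by
    intro hmem
    have hmle : maximalIdeal A ≤ P1.asIdeal := by
      rw [hm', Ideal.span_singleton_le_iff_mem]; exact hmem
    have hP1m : P1.asIdeal = maximalIdeal A :=
      le_antisymm (le_maximalIdeal P1.isPrime.ne_top) hmle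
    have : P2.asIdeal ≤ P1.asIdeal := by
      rw [hP1m]; exact le_maximalIdeal P2.isPrime.ne_top
    exact absurd h12' (not_lt_of_ge this)
  obtain ⟨g, hg⟩ := aux_prime_principal π' 0
    (by rw [hm]; rw [Set.pair_comm]) P1.asIdeal P1.isPrime hπ'P1
  have hgP1 : g ∈ P1.asIdeal := by rw [hg]; exact Ideal.subset_span rfl
  have hgm : g ∈ Ideal.span {π'} := by
    rw [← hm']
    exact le_maximalIdeal P1.isPrime.ne_top hgP1
  obtain ⟨h, hh⟩ := Ideal.mem_span_singleton'.mp hgm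
  have hhP1 : h ∈ P1.asIdeal := by
    have hmul : h * π' ∈ P1.asIdeal := by rw [hh]; exact hgP1
    rcases P1.isPrime.mem_or_mem hmul with h' | h'
    · exact h'
    · exact absurd h' hπ'P1
  rw [hg] at hhP1
  obtain ⟨k, hk⟩ := Ideal.mem_span_singleton'.mp hhP1
  have hgeq : g * (1 - k * π') = 0 := by
    linear_combination (-1 : A) * hh - π' * hk
  have hu : IsUnit (1 - k * π') := by
    by_contra hnu
    have hmem : (1 - k * π') ∈ maximalIdeal A := hnu
    have hπ'm : π' ∈ maximalIdeal A := by
      rw [hm']; exact Ideal.subset_span rfl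
    have h1m : (1 : A) ∈ maximalIdeal A := by
      simpa using add_mem hmem ((maximalIdeal A).mul_mem_left k hπ'm)
    exact (maximalIdeal.isMaximal A).ne_top ((Ideal.eq_top_iff_one _).mpr h1m)
  have hg0 : g = 0 := by
    have := (IsUnit.mul_left_eq_zero hu).mp hgeq
    exact this
  rw [hg0] at hg
  have hP1bot : P1.asIdeal = ⊥ := by
    rw [hg, Ideal.span_singleton_eq_bot.mpr rfl]
  rw [hP1bot] at h01'
  exact absurd h01' (by simp)



section TensorAux

variable {R : Type u} {M : Type u} [CommRing R] [AddCommGroup M] [Module R M]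

/-- Injectivity of `I ⊗ M → R ⊗ M` for a principal ideal `I = (f)`, when `M` is torsion-free. -/
lemma aux_principal_inj (htf : ∀ (r : R) (m : M), r • m = 0 → r = 0 ∨ m = 0) (f : R) :
    Function.Injective (rTensor M (Ideal.span {f} : Ideal R).subtype) := by
  set I : Ideal R := Ideal.span {f} with hI
  have hfI : f ∈ I := Ideal.subset_span rfl
  rw [injective_iff_map_eq_zero]
  intro t ht
  -- every element of I ⊗ M is of the form f ⊗ m
  have hsurj : Function.Surjective (TensorProduct.mk R I M ⟨f, hfI⟩) := by
    rw [← LinearMap.range_eq_top, ← top_le_iff, ← TensorProduct.span_tmul_eq_top R I M,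
      Submodule.span_le]
    rintro _ ⟨a, m, rfl⟩
    obtain ⟨r, hr⟩ := Ideal.mem_span_singleton'.mp a.2
    refine ⟨r • m, ?_⟩
    have ha' : (r • (⟨f, hfI⟩ : I)) = a := Subtype.ext (by simpa [smul_eq_mul] using hr)
    rw [TensorProduct.mk_apply, TensorProduct.tmul_smul, TensorProduct.smul_tmul', ha']
  obtain ⟨m, rfl⟩ := hsurj t
  have hval : rTensor M I.subtype (TensorProduct.mk R I M ⟨f, hfI⟩ m) = f ⊗ₜ[R] m := rfl
  rw [hval] at ht
  have hsm : f • m = 0 := by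
    have := congrArg (TensorProduct.lid R M) ht
    simpa using this
  rcases htf f m hsm with h | h
  · have : (⟨f, hfI⟩ : I) = 0 := Subtype.ext h
    rw [TensorProduct.mk_apply, this, TensorProduct.zero_tmul]
  · rw [TensorProduct.mk_apply, h, TensorProduct.tmul_zero]

/-- The colon-ideal dévissage step. -/
lemma aux_step (I : Ideal R) (x : R)
    (hC : Function.Injective (rTensor M (I.colon (Ideal.span {x})).subtype))
    (hJ : Function.Injective (rTensor M (I ⊔ Ideal.span {x}).subtype)) :
    Function.Injective (rTensor M I.subtype) := by
  set C : Ideal R := I.colon (Ideal.span {x}) with hCdef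
  set J : Ideal R := I ⊔ Ideal.span {x} with hJdef
  have hIJ : I ≤ J := le_sup_left
  -- the maps of the presentation C → I × R → J → 0
  let δ1 : C →ₗ[R] I :=
    { toFun := fun c => ⟨-(c.1 * x), neg_mem (Ideal.mem_colon_span_singleton.mp c.2)⟩
      map_add' := fun a b => Subtype.ext (by simp [add_mul]; ring)
      map_smul' := fun r a => Subtype.ext (by simp [smul_eq_mul]; ring) }
  let δ : C →ₗ[R] I × R := δ1.prod C.subtype
  let κ : R →ₗ[R] J :=
    { toFun := fun r => ⟨r * x, (le_sup_right : Ideal.span {x} ≤ J)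
        (Ideal.mem_span_singleton'.mpr ⟨r, rfl⟩)⟩
      map_add' := fun a b => Subtype.ext (by simp [add_mul])
      map_smul' := fun r a => Subtype.ext (by simp [smul_eq_mul]; ring) }
  let γ : I × R →ₗ[R] J := (Submodule.inclusion hIJ).coprod κ
  have hexact : Function.Exact δ γ := by
    rintro ⟨i, r⟩
    constructor
    · intro hy
      have hy' : i.1 + r * x = 0 := by
        have := congrArg Subtype.val hy
        simpa [γ, κ, Submodule.inclusion] using this
      have hrC : r ∈ C := by
        rw [hCdef]
        refine Ideal.mem_colon_span_singleton.mpr ?_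
        have hrx : r * x = -i.1 := by linear_combination hy'
        rw [hrx]
        exact neg_mem i.2
      refine ⟨⟨r, hrC⟩, ?_⟩
      refine Prod.ext (Subtype.ext ?_) rfl
      show -(r * x) = i.1
      linear_combination -hy'
    · rintro ⟨c, hc⟩
      rw [← hc]
      refine Subtype.ext ?_
      show -(c.1 * x) + c.1 * x = 0
      ring
  have hsurj : Function.Surjective γ := by
    rintro ⟨j, hj⟩
    obtain ⟨i, hi, s, hs, rfl⟩ := Submodule.mem_sup.mp hj
    obtain ⟨r, rfl⟩ := Ideal.mem_span_singleton'.mp hs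
    exact ⟨(⟨i, hi⟩, r), rfl⟩
  have hTex : Function.Exact (rTensor M δ) (rTensor M γ) :=
    rTensor_exact M hexact hsurj
  rw [injective_iff_map_eq_zero] at hC hJ ⊢
  intro t ht
  set u := rTensor M (LinearMap.inl R I R) t with hu
  have hcomp12 : (J.subtype ∘ₗ γ) ∘ₗ LinearMap.inl R I R = I.subtype := by
    ext i
    show ((γ (i, 0) : J) : R) = (i : R)
    simp [γ, κ]
  have hγu0 : rTensor M γ u = 0 := by
    apply hJ
    rw [hu, ← rTensor_comp_apply, ← rTensor_comp_apply, hcomp12]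
    exact ht
  obtain ⟨v, hv⟩ := (hTex u).mp hγu0
  have hsndδ : LinearMap.snd R I R ∘ₗ δ = C.subtype := rfl
  have hv0 : v = 0 := by
    apply hC
    rw [← hsndδ, rTensor_comp_apply, hv, hu, ← rTensor_comp_apply,
      LinearMap.snd_comp_inl]
    simp
  have hu0 : u = 0 := by rw [← hv, hv0, map_zero]
  have hfst : rTensor M (LinearMap.fst R I R) u = t := by
    rw [hu, ← rTensor_comp_apply, LinearMap.fst_comp_inl, rTensor_id]
    simp
  rw [← hfst, hu0, map_zero]

/-- Injectivity for the maximal ideal, via the Koszul-type argument from the hypotheses. -/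
lemma aux_max_inj [IsLocalRing R] (π₁ π₂ : R)
    (hm : maximalIdeal R = Ideal.span {π₁, π₂})
    (hπ₁ : π₁ ≠ 0)
    (htf : ∀ (r : R) (m : M), r • m = 0 → r = 0 ∨ m = 0)
    (hreg : ∀ m : M, (∃ m', π₂ • m = π₁ • m') → ∃ m', m = π₁ • m') :
    Function.Injective (rTensor M (maximalIdeal R).subtype) := by
  set I : Ideal R := maximalIdeal R with hIdef
  have hπ₁I : π₁ ∈ I := by rw [hm]; exact Ideal.subset_span (by simp)
  have hπ₂I : π₂ ∈ I := by rw [hm]; exact Ideal.subset_span (by simp)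
  set p1 : I := ⟨π₁, hπ₁I⟩ with hp1
  set p2 : I := ⟨π₂, hπ₂I⟩ with hp2
  rw [injective_iff_map_eq_zero]
  intro t ht
  -- representation t = π₁ ⊗ m₁ + π₂ ⊗ m₂
  set ψ : M × M →ₗ[R] I ⊗[R] M :=
    (TensorProduct.mk R I M p1).coprod (TensorProduct.mk R I M p2) with hψ
  have hsurj : Function.Surjective ψ := by
    rw [← LinearMap.range_eq_top, ← top_le_iff, ← TensorProduct.span_tmul_eq_top R I M,
      Submodule.span_le]
    rintro _ ⟨a, m, rfl⟩
    have ha : a.1 ∈ Ideal.span {π₁, π₂} := by rw [← hm]; exact a.2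
    obtain ⟨r, s, hrs⟩ := Ideal.mem_span_pair.mp ha
    refine ⟨(r • m, s • m), ?_⟩
    show p1 ⊗ₜ[R] (r • m) + p2 ⊗ₜ[R] (s • m) = a ⊗ₜ[R] m
    rw [TensorProduct.tmul_smul, TensorProduct.smul_tmul', TensorProduct.tmul_smul,
      TensorProduct.smul_tmul', ← TensorProduct.add_tmul]
    congr 1
    refine Subtype.ext ?_
    simpa [smul_eq_mul] using hrs
  obtain ⟨⟨m₁, m₂⟩, rfl⟩ := hsurj t
  have hval : rTensor M I.subtype (ψ (m₁, m₂)) = π₁ ⊗ₜ[R] m₁ + π₂ ⊗ₜ[R] m₂ := rfl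
  rw [hval] at ht
  have heq : π₁ • m₁ + π₂ • m₂ = 0 := by
    have := congrArg (TensorProduct.lid R M) ht
    simpa using this
  obtain ⟨w, hw⟩ := hreg m₂ ⟨-m₁, by rw [smul_neg]; exact eq_neg_of_add_eq_zero_left (by rw [add_comm]; exact heq)⟩
  have hm₁ : m₁ = -(π₂ • w) := by
    have h0 : π₁ • (m₁ + π₂ • w) = 0 := by
      rw [smul_add, smul_comm π₁ π₂ w, ← hw]
      exact heq
    rcases htf _ _ h0 with h | h
    · exact absurd h hπ₁
    · exact eq_neg_of_add_eq_zero_left h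
  show ψ (m₁, m₂) = 0
  have hexp : ψ (m₁, m₂) = p1 ⊗ₜ[R] m₁ + p2 ⊗ₜ[R] m₂ := rfl
  have h1 : p1 ⊗ₜ[R] (-(π₂ • w)) = -((π₂ • p1) ⊗ₜ[R] w) := by
    rw [TensorProduct.tmul_neg, TensorProduct.tmul_smul, TensorProduct.smul_tmul']
  have h2 : p2 ⊗ₜ[R] (π₁ • w) = (π₁ • p2) ⊗ₜ[R] w := by
    rw [TensorProduct.tmul_smul, TensorProduct.smul_tmul']
  have hps : π₂ • p1 = π₁ • p2 := Subtype.ext (by simp [smul_eq_mul, mul_comm, hp1, hp2])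
  rw [hexp, hm₁, hw, h1, h2, hps, neg_add_cancel]

/-- Injectivity for the top ideal. -/
lemma aux_top_inj : Function.Injective (rTensor M (⊤ : Ideal R).subtype) := by
  set ψ : R →ₗ[R] (⊤ : Ideal R) := LinearMap.codRestrict _ LinearMap.id (fun _ => trivial) with hψ
  have hcomp : ψ ∘ₗ (⊤ : Ideal R).subtype = LinearMap.id := rfl
  intro a b hab
  have h := congrArg (rTensor M ψ) hab
  rwa [← rTensor_comp_apply, ← rTensor_comp_apply, hcomp, rTensor_id, LinearMap.id_apply,
    LinearMap.id_apply] at h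

end TensorAux

/-- Lemma 2.9: a torsion-free module over a two-dimensional regular local ring on whose
quotient by one regular parameter the other regular parameter acts regularly is flat. -/
theorem flat_of_torsionFree_of_regular_param
    (R M : Type u) [CommRing R] [IsLocalRing R] [IsNoetherianRing R]
    (hdim : ringKrullDim R = 2)
    (π₁ π₂ : R) (hm : IsLocalRing.maximalIdeal R = Ideal.span {π₁, π₂})
    [AddCommGroup M] [Module R M]
    (htf : ∀ (r : R) (m : M), r • m = 0 → r = 0 ∨ m = 0)
    (hreg : ∀ m : M, (∃ m', π₂ • m = π₁ • m') → ∃ m', m = π₁ • m') :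
    Module.Flat R M := by
  have hπ₁ : π₁ ≠ 0 := aux_param_ne_zero hdim π₁ π₂ hm
  rw [Module.Flat.iff_rTensor_injective']
  intro I
  refine IsNoetherian.induction
    (P := fun I : Ideal R => Function.Injective (rTensor M (Submodule.subtype I)))
    (fun I IH => ?_) I
  by_cases hex : ∃ x : R, x ∉ I ∧ I.colon (Ideal.span {x}) ≠ I
  · obtain ⟨x, hxI, hcol⟩ := hex
    refine aux_step I x (IH _ ?_) (IH _ ?_)
    · -- I < I.colon (span {x})
      refine lt_of_le_of_ne (fun a ha => ?_) (Ne.symm hcol)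
      exact Ideal.mem_colon_span_singleton.mpr (Ideal.mul_mem_right x I ha)
    · -- I < I ⊔ span {x}
      refine lt_of_le_of_ne le_sup_left (fun h => hxI ?_)
      rw [h]
      exact Ideal.mem_sup_right (Ideal.subset_span rfl)
  · push_neg at hex
    by_cases htop : I = ⊤
    · rw [htop]
      exact aux_top_inj
    · have hprime : Ideal.IsPrime I := by
        refine ⟨htop, fun {a b} hab => ?_⟩
        by_cases hb : b ∈ I
        · exact Or.inr hb
        · exact Or.inl (by rw [← hex b hb]; exact Ideal.mem_colon_span_singleton.mpr hab)
      by_cases hπ₁I : π₁ ∈ I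
      · by_cases hπ₂I : π₂ ∈ I
        · have hIm : I = maximalIdeal R := by
            refine le_antisymm (le_maximalIdeal htop) ?_
            rw [hm, Ideal.span_le]
            rintro y (rfl | rfl)
            · exact hπ₁I
            · exact hπ₂I
          rw [hIm]
          exact aux_max_inj π₁ π₂ hm hπ₁ htf hreg
        · obtain ⟨g, hg⟩ := aux_prime_principal π₂ π₁
            (by rw [hm, Set.pair_comm]) I hprime hπ₂I
          rw [hg]
          exact aux_principal_inj htf g
      · obtain ⟨g, hg⟩ := aux_prime_principal π₁ π₂ hm I hprime hπ₁I
        rw [hg]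
        exact aux_principal_inj htf g
end

section
/- Let D be an integral domain and suppose there exists a nonzero element t in D such that (I) D[t⁻¹] is a Noetherian ring, (II) tD is a maximal ideal of D, and (III) ht(tD) = 1 (equivalently, ⋂_{n≥1} tⁿD = (0)). Then D is a Noetherian ring. -/
universe u

/-- Lemma 2.4: a Noetherian criterion for an integral domain. -/
theorem isNoetherianRing_of_localization_away
    (D : Type u) [CommRing D] [IsDomain D]
    (t : D) (ht0 : t ≠ 0)
    (hI : IsNoetherianRing (Localization.Away t))
    (hII : (Ideal.span {t}).IsMaximal)
    (hIII : idealHeight (Ideal.span {t}) = 1) :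
    IsNoetherianRing D := by
  classical
  haveI htprime : (Ideal.span {t} : Ideal D).IsPrime := hII.isPrime
  -- Step 1: primes contained in (t) are ⊥ or (t)
  have ht1 : ∀ P : Ideal D, P.IsPrime → P ≤ Ideal.span {t} →
      P = ⊥ ∨ P = Ideal.span {t} := by
    intro P hP hle
    by_contra hcon
    push_neg at hcon
    obtain ⟨hne0, hnet⟩ := hcon
    set P0 : PrimeSpectrum D := ⟨⊥, Ideal.bot_prime⟩ with hP0
    set P1 : PrimeSpectrum D := ⟨P, hP⟩ with hP1
    set P2 : PrimeSpectrum D := ⟨Ideal.span {t}, htprime⟩ with hP2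
    have h01 : P0 < P1 := by
      rw [← PrimeSpectrum.asIdeal_lt_asIdeal]
      exact bot_lt_iff_ne_bot.mpr hne0
    have h12 : P1 < P2 := by
      rw [← PrimeSpectrum.asIdeal_lt_asIdeal]
      exact lt_of_le_of_ne hle hnet
    let c : LTSeries (PrimeSpectrum D) :=
      ((RelSeries.singleton {(a, b) : PrimeSpectrum D × PrimeSpectrum D | a < b} P0).snoc P1
        (by simpa only [RelSeries.last_singleton, Set.mem_setOf_eq] using h01)).snoc P2
        (by simpa only [RelSeries.last_snoc, Set.mem_setOf_eq] using h12)
    have hclen : c.length = 2 := by simp [c]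
    have hclast : c.last = P2 := by simp [c]
    have h2 : (2 : ℕ∞) ≤ Order.height P2 := by
      have := Order.length_le_height_last (p := c)
      rwa [hclen, hclast] at this
    have hh : idealHeight (Ideal.span {t}) = Order.height P2 := by
      unfold idealHeight
      apply le_antisymm
      · exact iInf₂_le P2 le_rfl
      · refine le_iInf₂ fun Q hQ => ?_
        have hQ2 : Q = P2 := PrimeSpectrum.ext (hII.eq_of_le Q.2.ne_top hQ).symm
        rw [hQ2]
    rw [hh] at hIII
    rw [hIII] at h2
    exact absurd h2 (by norm_num)
  -- Step 2: intersection of (t^n) is zero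
  have hinter : ∀ x : D, x ≠ 0 → ∃ N : ℕ, x ∉ Ideal.span {t ^ N} := by
    intro x hx
    by_contra hcon
    push_neg at hcon
    set L := Localization.AtPrime (Ideal.span {t} : Ideal D) with hL
    have hinj : Function.Injective (algebraMap D L) :=
      IsLocalization.injective L (Ideal.span {t} : Ideal D).primeCompl_le_nonZeroDivisors
    have hrad : algebraMap D L t ∈
        (Ideal.map (algebraMap D L) (Ideal.span {x})).radical := by
      rw [Ideal.radical_eq_sInf]
      refine Ideal.mem_sInf.mpr ?_
      rintro J ⟨hle, hJprime⟩
      have hxJ : x ∈ J.comap (algebraMap D L) :=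
        hle (Ideal.mem_map_of_mem _ (Ideal.mem_span_singleton_self x))
      have hcom : J.comap (algebraMap D L) ≤ Ideal.span {t} := by
        intro p hp
        by_contra hpt
        have hu : IsUnit (algebraMap D L p) :=
          IsLocalization.map_units L (⟨p, hpt⟩ : (Ideal.span {t} : Ideal D).primeCompl)
        exact hJprime.ne_top (J.eq_top_of_isUnit_mem hp hu)
      rcases ht1 _ (hJprime.comap _) hcom with h0 | hPt
      · exfalso
        rw [h0] at hxJ
        exact hx (Ideal.mem_bot.mp hxJ)
      · have : t ∈ J.comap (algebraMap D L) := by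
          rw [hPt]; exact Ideal.mem_span_singleton_self t
        exact this
    obtain ⟨k, hk⟩ := hrad
    rw [← map_pow] at hk
    rw [IsLocalization.mem_map_algebraMap_iff
      (Ideal.span {t} : Ideal D).primeCompl L] at hk
    obtain ⟨⟨⟨j, hj⟩, m⟩, hm⟩ := hk
    have heq : t ^ k * (m : D) = j := hinj (by rw [map_mul]; exact hm)
    obtain ⟨cc, hc⟩ := Ideal.mem_span_singleton'.mp hj
    obtain ⟨d, hd⟩ := Ideal.mem_span_singleton'.mp (hcon (k + 1))
    have hmm : t ^ k * (m : D) = t ^ k * (cc * d * t) := by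
      rw [heq, ← hc, ← hd]; ring
    have hmt : (m : D) = cc * d * t := mul_left_cancel₀ (pow_ne_zero k ht0) hmm
    have : (m : D) ∈ Ideal.span {t} := Ideal.mem_span_singleton'.mpr ⟨cc * d, hmt.symm⟩
    exact m.2 this
  -- Step 3: ideals containing an element outside (t) are f.g.
  have fgMain : ∀ I : Ideal D, ∀ s : D, s ∈ I → s ∉ Ideal.span {t} → I.FG := by
    intro I s hsI hst
    apply Ideal.fg_of_localizationSpan ({t, s} : Set D)
    · by_contra hne
      obtain ⟨M, hM, hlee⟩ := Ideal.exists_le_maximal _ hne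
      have htM : t ∈ M := hlee (Ideal.subset_span (by simp))
      have hsM : s ∈ M := hlee (Ideal.subset_span (by simp))
      have hMt : Ideal.span {t} = M :=
        hII.eq_of_le hM.ne_top ((Ideal.span_le).mpr (by simpa using htM))
      exact hst (hMt ▸ hsM)
    · rintro ⟨g, hg⟩
      rcases Set.mem_insert_iff.mp hg with rfl | hg'
      · exact (isNoetherianRing_iff_ideal_fg _).mp hI _
      · rcases Set.mem_singleton_iff.mp hg' with rfl
        have hu : IsUnit (algebraMap D (Localization.Away g) g) :=
          IsLocalization.map_units _ (⟨g, Submonoid.mem_powers g⟩ : Submonoid.powers g)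
        have htop : (I.map (algebraMap D (Localization.Away g))) = ⊤ :=
          Ideal.eq_top_of_isUnit_mem _ (Ideal.mem_map_of_mem _ hsI) hu
        rw [htop]
        exact ⟨{1}, by simp⟩
  -- Step 4: every ideal is f.g.
  rw [isNoetherianRing_iff_ideal_fg]
  intro I
  by_cases hI0 : I = ⊥
  · exact hI0 ▸ ⟨∅, by simp⟩
  obtain ⟨x, hxI, hx0⟩ := Submodule.exists_mem_ne_zero_of_ne_bot hI0
  obtain ⟨N, hN⟩ := hinter x hx0
  have hex : ∃ n : ℕ, ¬ I ≤ Ideal.span {t ^ n} := ⟨N, fun h => hN (h hxI)⟩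
  set k := Nat.find hex with hkdef
  have hk0 : k ≠ 0 := by
    intro h
    have hspec := Nat.find_spec hex
    rw [← hkdef, h] at hspec
    simp [Ideal.span_singleton_one] at hspec
  set n := k - 1 with hndef
  have hPn : I ≤ Ideal.span {t ^ n} := by
    by_contra h
    exact Nat.find_min hex (show n < k by omega) h
  have hnot : ¬ I ≤ Ideal.span {t ^ (n + 1)} := by
    have hnk : n + 1 = k := by omega
    rw [hnk]
    exact Nat.find_spec hex
  set C := I.colon (Ideal.span {t ^ n}) with hCdef
  have hCs : ∃ s, s ∈ C ∧ s ∉ Ideal.span {t} := by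
    by_contra h
    push_neg at h
    apply hnot
    intro a ha
    obtain ⟨b, hb⟩ := Ideal.mem_span_singleton'.mp (hPn ha)
    have hbC : b ∈ C := Ideal.mem_colon_span_singleton.mpr (by rw [hb]; exact ha)
    obtain ⟨c, hc⟩ := Ideal.mem_span_singleton'.mp (h b hbC)
    exact Ideal.mem_span_singleton'.mpr ⟨c, by rw [← hb, ← hc]; ring⟩
  obtain ⟨s, hsC, hst⟩ := hCs
  have hCfg : C.FG := fgMain C s hsC hst
  have hIC : I = Ideal.span {t ^ n} * C := by
    apply le_antisymm
    · intro a ha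
      obtain ⟨b, hb⟩ := Ideal.mem_span_singleton'.mp (hPn ha)
      have hbC : b ∈ C := Ideal.mem_colon_span_singleton.mpr (by rw [hb]; exact ha)
      have : t ^ n * b ∈ Ideal.span {t ^ n} * C :=
        Ideal.mul_mem_mul (Ideal.mem_span_singleton_self _) hbC
      rwa [show t ^ n * b = a by rw [← hb]; ring] at this
    · rw [Ideal.mul_le]
      intro r hr c hc
      obtain ⟨d, hd⟩ := Ideal.mem_span_singleton'.mp hr
      have hcI : c * t ^ n ∈ I := Ideal.mem_colon_span_singleton.mp hc
      have : r * c = d * (c * t ^ n) := by rw [← hd]; ring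
      rw [this]
      exact Ideal.mul_mem_left _ _ hcI
  rw [hIC]
  exact Submodule.FG.mul ⟨{t ^ n}, by simp⟩ hCfg
end
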